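/- arXiv:0902.0586 — 9 statements merged into one kernel-verified Lean document; each statement's English description precedes it below -/
import Mathlib

section
/- Assume the network is asymmetric, i.e. E_{M,D} = ℝ^n. If a vector q ∈ ℝ^N satisfies I_D Γ^k q = 0 for every k ∈ ℕ, then q = 0. -/
open Matrix

/-- If the network is asymmetric (`E_{M,D} = ℝ^n`) and `I_D Γ^k q = 0` for
every `k`, then `q = 0`. -/
theorem stmt0 (N : ℕ) (hN : 0 < N) (G : SimpleGraph (Fin N)) [DecidableRel G.Adj]
    (hG : G.Connected)
    (D : Finset (Fin N)) (hD : D.Nonempty)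
    (Γ : Matrix (Fin N) (Fin N) ℝ)
    (hΓ : Γ = 1 + (Matrix.diagonal (fun i => (G.degree i : ℝ)) - G.adjMatrix ℝ))
    (ID : Matrix (Fin N) (Fin N) ℝ)
    (hID : ID = Matrix.diagonal (fun i => if i ∈ D then (1 : ℝ) else 0))
    (M : Matrix (Fin N ⊕ Fin N) (Fin N ⊕ Fin N) ℝ)
    (hM : M = Matrix.fromBlocks 0 1 (-Γ) (-ID))
    (hasym : Submodule.span ℝ
      {v : (Fin N ⊕ Fin N) → ℝ | ∃ i ∈ D, ∃ k : ℕ, v = (M ^ k).mulVec (Pi.single (Sum.inr i) 1)}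
      = ⊤)
    (q : Fin N → ℝ)
    (hq : ∀ k : ℕ, (ID * Γ ^ k).mulVec q = 0) :
    q = 0 := by
  classical
  -- symmetry of Γ and ID
  have hΓT : Γᵀ = Γ := by
    rw [hΓ]
    simp [Matrix.transpose_add, Matrix.transpose_sub, Matrix.diagonal_transpose]
  have hIDT : IDᵀ = ID := by
    rw [hID, Matrix.diagonal_transpose]
  have hMT : Mᵀ = Matrix.fromBlocks 0 (-Γ) 1 (-ID) := by
    rw [hM, Matrix.fromBlocks_transpose]
    simp [Matrix.transpose_neg, hΓT, hIDT]
  -- the cyclic subspace generated by q under Γ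
  set U : Submodule ℝ (Fin N → ℝ) :=
    Submodule.span ℝ {y | ∃ m : ℕ, y = (Γ ^ m).mulVec q} with hUdef
  have hUker : ∀ y ∈ U, ID.mulVec y = 0 := by
    intro y hy
    have hle : U ≤ LinearMap.ker ID.mulVecLin := by
      rw [hUdef, Submodule.span_le]
      rintro y ⟨m, rfl⟩
      simp only [SetLike.mem_coe, LinearMap.mem_ker, Matrix.mulVecLin_apply]
      rw [Matrix.mulVec_mulVec]
      exact hq m
    simpa using hle hy
  have hUΓ : ∀ y ∈ U, Γ.mulVec y ∈ U := by
    intro y hy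
    induction hy using Submodule.span_induction with
    | mem x hx =>
        obtain ⟨m, rfl⟩ := hx
        apply Submodule.subset_span
        exact ⟨m + 1, by rw [Matrix.mulVec_mulVec, ← pow_succ']⟩
    | zero => simpa [Matrix.mulVec_zero] using U.zero_mem
    | add a b ha hb iha ihb => simpa [Matrix.mulVec_add] using U.add_mem iha ihb
    | smul c a ha iha => simpa [Matrix.mulVec_smul] using U.smul_mem c iha
  set v : (Fin N ⊕ Fin N) → ℝ := Sum.elim q 0 with hv
  -- key invariant
  have key : ∀ k : ℕ, ((Mᵀ ^ k).mulVec v ∘ Sum.inl ∈ U) ∧ ((Mᵀ ^ k).mulVec v ∘ Sum.inr ∈ U) := by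
    intro k
    induction k with
    | zero =>
        rw [pow_zero, Matrix.one_mulVec]
        constructor
        · apply Submodule.subset_span
          exact ⟨0, by funext j; simp [hv, Matrix.one_mulVec]⟩
        · simpa [hv] using U.zero_mem
    | succ k ih =>
        obtain ⟨h1, h2⟩ := ih
        set w := (Mᵀ ^ k).mulVec v with hw
        have hwe : w = Sum.elim (w ∘ Sum.inl) (w ∘ Sum.inr) := by
          funext j; cases j <;> rfl
        have hstep : (Mᵀ ^ (k + 1)).mulVec v
            = Sum.elim (-(Γ.mulVec (w ∘ Sum.inr))) (w ∘ Sum.inl) := by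
          rw [pow_succ', ← Matrix.mulVec_mulVec, ← hw, hMT, hwe, Matrix.fromBlocks_mulVec]
          have hzero : ID.mulVec (w ∘ Sum.inr) = 0 := hUker _ h2
          simp [Matrix.neg_mulVec, hzero, Matrix.one_mulVec]
        rw [hstep]
        constructor
        · have := hUΓ _ h2
          simpa using U.neg_mem this
        · exact h1
  -- v is orthogonal to each generator
  have horth : ∀ x ∈ {x : (Fin N ⊕ Fin N) → ℝ |
      ∃ i ∈ D, ∃ k : ℕ, x = (M ^ k).mulVec (Pi.single (Sum.inr i) 1)}, v ⬝ᵥ x = 0 := by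
    rintro x ⟨i, hi, k, rfl⟩
    have h1 : v ⬝ᵥ (M ^ k).mulVec (Pi.single (Sum.inr i) 1)
        = (Mᵀ ^ k).mulVec v ⬝ᵥ (Pi.single (Sum.inr i) 1) := by
      rw [Matrix.dotProduct_mulVec, ← Matrix.transpose_pow, Matrix.mulVec_transpose]
    rw [h1, dotProduct_single, mul_one]
    -- entry i of the inr component vanishes since it's killed by ID
    have h2 : ID.mulVec ((Mᵀ ^ k).mulVec v ∘ Sum.inr) = 0 := hUker _ (key k).2
    have h3 := congrFun h2 i
    rw [hID] at h3
    simpa [Matrix.mulVec_diagonal, hi] using h3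
  -- the functional x ↦ v ⬝ᵥ x vanishes everywhere
  have hall : ∀ x : (Fin N ⊕ Fin N) → ℝ, v ⬝ᵥ x = 0 := by
    intro x
    let f : ((Fin N ⊕ Fin N) → ℝ) →ₗ[ℝ] ℝ :=
      { toFun := fun x => v ⬝ᵥ x
        map_add' := fun a b => dotProduct_add v a b
        map_smul' := fun c a => by simp [dotProduct_smul] }
    have hle : Submodule.span ℝ {x : (Fin N ⊕ Fin N) → ℝ |
        ∃ i ∈ D, ∃ k : ℕ, x = (M ^ k).mulVec (Pi.single (Sum.inr i) 1)} ≤ LinearMap.ker f := by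
      rw [Submodule.span_le]
      intro x hx
      exact horth x hx
    rw [hasym] at hle
    exact hle (Submodule.mem_top : x ∈ ⊤)
  funext j
  have := hall (Pi.single (Sum.inl j) 1)
  rw [dotProduct_single, mul_one] at this
  simpa [hv] using this
end

section
/- If the network is asymmetric, i.e. E_{M,D} = ℝ^n, then the matrix M is stable: every complex eigenvalue λ of M (equivalently, every root of the characteristic polynomial of M over ℂ) satisfies Re λ < 0. -/
open Matrix Polynomial

namespace Stmt1Aux

variable {n : Type*} [Fintype n] [DecidableEq n]

lemma eval_charpoly (A : Matrix n n ℂ) (t : ℂ) :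
    A.charpoly.eval t = (t • (1 : Matrix n n ℂ) - A).det := by
  rw [Matrix.charpoly, ← Polynomial.coe_evalRingHom, RingHom.map_det]
  congr 1
  ext i j
  rw [RingHom.mapMatrix_apply, Matrix.map_apply]
  by_cases h : i = j
  · subst h; simp [charmatrix_apply_eq, Matrix.one_apply]
  · simp [charmatrix_apply_ne _ _ _ h, Matrix.one_apply, h]

omit [DecidableEq n] in
lemma dot_ofReal (u w : n → ℝ) :
    (fun j => (u j : ℂ)) ⬝ᵥ (fun j => (w j : ℂ)) = ((u ⬝ᵥ w : ℝ) : ℂ) := by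
  simp [dotProduct]

omit [DecidableEq n] in
lemma mulVec_ofReal (A : Matrix n n ℝ) (v : n → ℝ) :
    (A.map (Complex.ofReal ·)) *ᵥ (fun j => (v j : ℂ)) = fun j => ((A *ᵥ v) j : ℂ) := by
  funext j
  exact (RingHom.map_mulVec Complex.ofRealHom A v j).symm

/-- Hermitian quadratic form of a real symmetric matrix, in terms of real/imag parts. -/
lemma herm_quad (S : Matrix n n ℝ) (hS : S.IsSymm) (x : n → ℂ) :
    star x ⬝ᵥ ((S.map (Complex.ofReal ·)) *ᵥ x)
      = ((((fun j => (x j).re) ⬝ᵥ (S *ᵥ fun j => (x j).re)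
          + (fun j => (x j).im) ⬝ᵥ (S *ᵥ fun j => (x j).im) : ℝ)) : ℂ) := by
  set p : n → ℝ := fun j => (x j).re with hp
  set q : n → ℝ := fun j => (x j).im with hq
  have hx : x = (fun j => (p j : ℂ)) + Complex.I • (fun j => (q j : ℂ)) := by
    funext j
    simp [hp, hq, Complex.ext_iff]
  have hstar : star x = (fun j => (p j : ℂ)) - Complex.I • (fun j => (q j : ℂ)) := by
    funext j
    simp [hx, Complex.ext_iff]
  have hsymm : p ⬝ᵥ (S *ᵥ q) = q ⬝ᵥ (S *ᵥ p) := by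
    rw [Matrix.dotProduct_mulVec, ← Matrix.mulVec_transpose, hS.eq, dotProduct_comm]
  rw [hstar]
  conv_lhs => rw [hx]
  simp only [Matrix.mulVec_add, Matrix.mulVec_smul, mulVec_ofReal, sub_dotProduct,
    dotProduct_add, smul_dotProduct, dotProduct_smul, dot_ofReal, smul_eq_mul]
  rw [hsymm]
  apply Complex.ext <;> simp <;> ring

lemma pow_mulVec_ofReal (A : Matrix n n ℝ) (v : n → ℝ) (k : ℕ) :
    (A.map (Complex.ofReal ·)) ^ k *ᵥ (fun j => (v j : ℂ)) = fun j => (((A ^ k *ᵥ v) j : ℝ) : ℂ) := by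
  induction k with
  | zero => simp
  | succ k ih =>
    rw [pow_succ', ← Matrix.mulVec_mulVec, ih]
    have := mulVec_ofReal A (A ^ k *ᵥ v)
    rw [this, pow_succ', ← Matrix.mulVec_mulVec]

end Stmt1Aux

open Stmt1Aux

/-- If the network is asymmetric (`E_{M,D} = ℝ^n`) then `M` is stable:
every complex root of its characteristic polynomial has strictly negative real part. -/
theorem stmt1 (N : ℕ) (hN : 0 < N) (G : SimpleGraph (Fin N)) [DecidableRel G.Adj]
    (hG : G.Connected)
    (D : Finset (Fin N)) (hD : D.Nonempty)
    (Γ : Matrix (Fin N) (Fin N) ℝ)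
    (hΓ : Γ = 1 + (Matrix.diagonal (fun i => (G.degree i : ℝ)) - G.adjMatrix ℝ))
    (ID : Matrix (Fin N) (Fin N) ℝ)
    (hID : ID = Matrix.diagonal (fun i => if i ∈ D then (1 : ℝ) else 0))
    (M : Matrix (Fin N ⊕ Fin N) (Fin N ⊕ Fin N) ℝ)
    (hM : M = Matrix.fromBlocks 0 1 (-Γ) (-ID))
    (hasym : Submodule.span ℝ
      {v : (Fin N ⊕ Fin N) → ℝ | ∃ i ∈ D, ∃ k : ℕ, v = (M ^ k).mulVec (Pi.single (Sum.inr i) 1)}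
      = ⊤) :
    ∀ lam : ℂ, ((M.map (Complex.ofReal ·)).charpoly).IsRoot lam → lam.re < 0 := by
  intro lam hroot
  set Mc := M.map (Complex.ofReal ·) with hMc
  set Γc := Γ.map (Complex.ofReal ·) with hΓc
  set IDc := ID.map (Complex.ofReal ·) with hIDc
  -- symmetry facts
  have hΓsymm : Γ.IsSymm := by
    rw [hΓ]
    exact (Matrix.isSymm_one).add ((Matrix.isSymm_diagonal _).sub (G.isSymm_adjMatrix))
  have hIDsymm : ID.IsSymm := by rw [hID]; exact Matrix.isSymm_diagonal _
  -- the block structure over ℂ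
  have hMcBlocks : Mc = Matrix.fromBlocks 0 1 (-Γc) (-IDc) := by
    have m0 : (0 : Matrix (Fin N) (Fin N) ℝ).map (Complex.ofReal ·) = 0 := by
      ext i j; simp
    have m1 : (1 : Matrix (Fin N) (Fin N) ℝ).map (Complex.ofReal ·) = 1 := by
      ext i j; by_cases h : i = j <;> simp [Matrix.one_apply, h]
    have mg : (-Γ).map (Complex.ofReal ·) = -Γc := by ext i j; simp [hΓc]
    have mid : (-ID).map (Complex.ofReal ·) = -IDc := by ext i j; simp [hIDc]
    rw [hMc, hM, Matrix.fromBlocks_map, m0, m1, mg, mid]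
  -- eigenvector
  have hdet : (lam • (1 : Matrix (Fin N ⊕ Fin N) (Fin N ⊕ Fin N) ℂ) - Mc).det = 0 := by
    rw [← Stmt1Aux.eval_charpoly]; exact hroot
  obtain ⟨v, hv0, hveq⟩ := (Matrix.exists_mulVec_eq_zero_iff).2 hdet
  have hMv : Mc *ᵥ v = lam • v := by
    rw [Matrix.sub_mulVec, Matrix.smul_mulVec, Matrix.one_mulVec, sub_eq_zero] at hveq
    exact hveq.symm
  set x : Fin N → ℂ := fun i => v (Sum.inl i) with hxdef
  set y : Fin N → ℂ := fun i => v (Sum.inr i) with hydef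
  have hv : v = Sum.elim x y := by funext j; cases j <;> rfl
  have hMv' : Sum.elim ((0 : Matrix (Fin N) (Fin N) ℂ) *ᵥ x + (1 : Matrix (Fin N) (Fin N) ℂ) *ᵥ y)
      ((-Γc) *ᵥ x + (-IDc) *ᵥ y) = lam • Sum.elim x y := by
    have := hMv
    rw [hMcBlocks, hv, Matrix.fromBlocks_mulVec] at this
    simpa using this
  have h1 : y = lam • x := by
    funext i
    have := congrFun hMv' (Sum.inl i)
    simpa using this
  have h2 : -(Γc *ᵥ x) - IDc *ᵥ y = lam • y := by
    funext i
    have := congrFun hMv' (Sum.inr i)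
    simpa [Matrix.neg_mulVec, sub_eq_add_neg] using this
  have hx0 : x ≠ 0 := by
    intro h
    apply hv0
    rw [hv, h1, h]
    funext j; cases j <;> simp
  have hkey : Γc *ᵥ x = -(lam ^ 2) • x - lam • (IDc *ᵥ x) := by
    have := h2
    rw [h1, Matrix.mulVec_smul, smul_smul, ← pow_two] at this
    have h3 : -(Γc *ᵥ x) = lam ^ 2 • x + lam • (IDc *ᵥ x) := by
      rw [← this]; module
    have := congrArg Neg.neg h3
    rw [neg_neg] at this
    rw [this]; module
  -- real/imaginary decomposition and quadratic form values
  have h1map : (1 : Matrix (Fin N) (Fin N) ℝ).map (Complex.ofReal ·) = 1 := by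
    ext i j; by_cases h : i = j <;> simp [Matrix.one_apply, h]
  set p : Fin N → ℝ := fun j => (x j).re with hpdef
  set q : Fin N → ℝ := fun j => (x j).im with hqdef
  set A : ℝ := p ⬝ᵥ p + q ⬝ᵥ q with hAdef
  set B : ℝ := p ⬝ᵥ (ID *ᵥ p) + q ⬝ᵥ (ID *ᵥ q) with hBdef
  set C : ℝ := p ⬝ᵥ (Γ *ᵥ p) + q ⬝ᵥ (Γ *ᵥ q) with hCdef
  have ha : star x ⬝ᵥ x = (A : ℂ) := by
    have h := herm_quad (1 : Matrix (Fin N) (Fin N) ℝ) Matrix.isSymm_one x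
    rw [h1map] at h
    simp only [Matrix.one_mulVec] at h
    rw [hAdef, hpdef, hqdef]
    exact h
  have hb : star x ⬝ᵥ (IDc *ᵥ x) = (B : ℂ) := by
    rw [hIDc, herm_quad ID hIDsymm x, hBdef, hpdef, hqdef]
  have hc : star x ⬝ᵥ (Γc *ᵥ x) = (C : ℂ) := by
    rw [hΓc, herm_quad Γ hΓsymm x, hCdef, hpdef, hqdef]
  -- the quadratic equation
  have hquad : lam ^ 2 * (A : ℂ) + lam * (B : ℂ) + (C : ℂ) = 0 := by
    have h4 := congrArg (fun w => star x ⬝ᵥ w) hkey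
    simp only [dotProduct_sub, dotProduct_smul, smul_eq_mul, neg_mul] at h4
    rw [hc, ha, hb] at h4
    linear_combination h4
  -- positivity facts
  have hA : 0 < A := by
    obtain ⟨j₀, hj₀⟩ : ∃ j, x j ≠ 0 := by
      by_contra h
      push_neg at h
      exact hx0 (funext h)
    have hj₀' : 0 < p j₀ * p j₀ + q j₀ * q j₀ := by
      have hr : p j₀ = (x j₀).re := rfl
      have hi : q j₀ = (x j₀).im := rfl
      rw [hr, hi]
      have h := Complex.ext_iff.not.1 hj₀
      simp only [Complex.zero_re, Complex.zero_im, not_and_or] at h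
      rcases h with h | h
      · nlinarith [mul_self_pos.2 h, mul_self_nonneg (x j₀).im]
      · nlinarith [mul_self_pos.2 h, mul_self_nonneg (x j₀).re]
    have hA' : 0 < ∑ j, (p j * p j + q j * q j) :=
      Finset.sum_pos' (fun j _ => add_nonneg (mul_self_nonneg _) (mul_self_nonneg _))
        ⟨j₀, Finset.mem_univ _, hj₀'⟩
    rw [Finset.sum_add_distrib] at hA'
    rw [hAdef]
    simp only [dotProduct]
    exact hA'
  have hIDterm : ∀ z : Fin N → ℝ, z ⬝ᵥ (ID *ᵥ z) = ∑ j, (if j ∈ D then z j * z j else 0) := by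
    intro z
    rw [hID]
    simp only [dotProduct, Matrix.mulVec_diagonal]
    congr 1
    funext j
    by_cases h : j ∈ D <;> simp [h]
  have hB0le : 0 ≤ B := by
    rw [hBdef, hIDterm, hIDterm]
    have hnn : ∀ (z : Fin N → ℝ) (j : Fin N), (0:ℝ) ≤ if j ∈ D then z j * z j else 0 := by
      intro z j
      split_ifs
      · exact mul_self_nonneg _
      · exact le_rfl
    exact add_nonneg (Finset.sum_nonneg fun j _ => hnn p j) (Finset.sum_nonneg fun j _ => hnn q j)
  have hLap : Γ = 1 + G.lapMatrix ℝ := by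
    rw [hΓ]; rfl
  have hpsd : ∀ z : Fin N → ℝ, 0 ≤ z ⬝ᵥ (G.lapMatrix ℝ *ᵥ z) := by
    intro z
    have := (SimpleGraph.posSemidef_lapMatrix ℝ G).dotProduct_mulVec_nonneg z
    simpa using this
  have hCA : A ≤ C := by
    have e : ∀ z : Fin N → ℝ, z ⬝ᵥ (Γ *ᵥ z) = z ⬝ᵥ z + z ⬝ᵥ (G.lapMatrix ℝ *ᵥ z) := by
      intro z
      rw [hLap, Matrix.add_mulVec, Matrix.one_mulVec, dotProduct_add]
    rw [hCdef, hAdef, e, e]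
    have := hpsd p
    have := hpsd q
    linarith
  have hC : 0 < C := lt_of_lt_of_le hA hCA
  -- extract real and imaginary parts
  rw [pow_two] at hquad
  have hre := congrArg Complex.re hquad
  have him := congrArg Complex.im hquad
  simp only [Complex.add_re, Complex.add_im, Complex.mul_re, Complex.mul_im,
    Complex.ofReal_re, Complex.ofReal_im, Complex.zero_re, Complex.zero_im,
    mul_zero, zero_mul, sub_zero, add_zero, zero_add] at hre him
  by_contra hcon
  push_neg at hcon
  rcases eq_or_ne lam.im 0 with hτ | hτ
  · rw [hτ] at hre
    nlinarith [mul_nonneg (mul_nonneg hcon hcon) hA.le, mul_nonneg hcon hB0le]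
  · -- purely imaginary eigenvalue case
    have h5 : lam.im * (2 * lam.re * A + B) = 0 := by linear_combination him
    have h6 : 2 * lam.re * A + B = 0 := (mul_eq_zero.1 h5).resolve_left hτ
    have hσA : 0 ≤ lam.re * A := mul_nonneg hcon hA.le
    have hB0 : B = 0 := by linarith
    have hσ0 : lam.re = 0 := by
      have : lam.re * A = 0 := by linarith
      exact (mul_eq_zero.1 this).resolve_right (ne_of_gt hA)
    -- x vanishes on D
    have hxD : ∀ i ∈ D, x i = 0 := by
      intro i hi
      have hnnp : ∀ j ∈ Finset.univ, (0:ℝ) ≤ if j ∈ D then p j * p j else 0 := by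
        intro j _; split_ifs; exacts [mul_self_nonneg _, le_rfl]
      have hnnq : ∀ j ∈ Finset.univ, (0:ℝ) ≤ if j ∈ D then q j * q j else 0 := by
        intro j _; split_ifs; exacts [mul_self_nonneg _, le_rfl]
      have hB' : (∑ j, (if j ∈ D then p j * p j else 0)) +
          (∑ j, (if j ∈ D then q j * q j else 0)) = 0 := by
        rw [← hIDterm, ← hIDterm, ← hBdef, hB0]
      have n1 : 0 ≤ (∑ j, (if j ∈ D then p j * p j else 0)) := Finset.sum_nonneg hnnp
      have n2 : 0 ≤ (∑ j, (if j ∈ D then q j * q j else 0)) := Finset.sum_nonneg hnnq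
      have hz1 : (∑ j, (if j ∈ D then p j * p j else 0)) = 0 := by linarith
      have hz2 : (∑ j, (if j ∈ D then q j * q j else 0)) = 0 := by linarith
      have hp0 : p i = 0 := by
        have := (Finset.sum_eq_zero_iff_of_nonneg hnnp).1 hz1 i (Finset.mem_univ i)
        rw [if_pos hi] at this
        exact mul_self_eq_zero.1 this
      have hq0 : q i = 0 := by
        have := (Finset.sum_eq_zero_iff_of_nonneg hnnq).1 hz2 i (Finset.mem_univ i)
        rw [if_pos hi] at this
        exact mul_self_eq_zero.1 this
      exact Complex.ext hp0 hq0
    -- hence `IDc *ᵥ x = 0` and `Γc *ᵥ x = -(lam^2) • x`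
    have hIDx : IDc *ᵥ x = 0 := by
      have hIDcdiag : IDc = Matrix.diagonal (fun i => if i ∈ D then (1 : ℂ) else 0) := by
        rw [hIDc, hID, Matrix.diagonal_map (by simp)]
        ext i j
        by_cases h : i = j
        · subst h
          simp only [Matrix.diagonal_apply_eq]
          split_ifs <;> simp
        · simp [Matrix.diagonal_apply_ne _ h]
      funext i
      rw [hIDcdiag]
      show (Matrix.diagonal (fun i => if i ∈ D then (1:ℂ) else 0) *ᵥ x) i = 0
      rw [Matrix.mulVec_diagonal]
      by_cases h : i ∈ D
      · rw [hxD i h]; simp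
      · simp [h]
    have hΓx : Γc *ᵥ x = -(lam ^ 2) • x := by
      rw [hkey, hIDx]; simp
    -- transpose of Mc and the left eigenvector
    have hΓcT : Γcᵀ = Γc := by
      rw [hΓc, ← Matrix.transpose_map]
      rw [hΓsymm.eq]
    have hIDcT : IDcᵀ = IDc := by
      rw [hIDc, ← Matrix.transpose_map]
      rw [hIDsymm.eq]
    have hMt : Mcᵀ = Matrix.fromBlocks 0 (-Γc) 1 (-IDc) := by
      rw [hMcBlocks, Matrix.fromBlocks_transpose, Matrix.transpose_zero, Matrix.transpose_one,
        Matrix.transpose_neg, Matrix.transpose_neg, hΓcT, hIDcT]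
    set w : (Fin N ⊕ Fin N) → ℂ := Sum.elim (lam • x) x with hwdef
    have hw : Mcᵀ *ᵥ w = lam • w := by
      have hblk := Matrix.fromBlocks_mulVec (0 : Matrix (Fin N) (Fin N) ℂ) (-Γc)
        (1 : Matrix (Fin N) (Fin N) ℂ) (-IDc) w
      rw [← hMt] at hblk
      rw [hblk]
      funext j
      cases j with
      | inl i =>
        have : w ∘ Sum.inl = lam • x := rfl
        have h2 : w ∘ Sum.inr = x := rfl
        simp only [Sum.elim_inl, this, h2, Matrix.zero_mulVec, zero_add,
          Matrix.neg_mulVec, hΓx]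
        simp [smul_smul, pow_two, hwdef]
        ring
      | inr i =>
        have : w ∘ Sum.inl = lam • x := rfl
        have h2 : w ∘ Sum.inr = x := rfl
        simp only [Sum.elim_inr, this, h2, Matrix.one_mulVec, Matrix.neg_mulVec, hIDx]
        simp [hwdef]
    have hwk : ∀ k : ℕ, (Mcᵀ) ^ k *ᵥ w = lam ^ k • w := by
      intro k
      induction k with
      | zero => simp
      | succ k ih =>
        rw [pow_succ', ← Matrix.mulVec_mulVec, ih, Matrix.mulVec_smul, hw, smul_smul, ← pow_succ]
    -- pairing with the controllability generators vanishes
    have hgen : ∀ i ∈ D, ∀ k : ℕ,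
        (∑ j, w j * ((((M ^ k) *ᵥ Pi.single (Sum.inr i) 1) j : ℝ) : ℂ)) = 0 := by
      intro i hi k
      have hsingle : (fun j => ((Pi.single (Sum.inr i) 1 : (Fin N ⊕ Fin N) → ℝ) j : ℂ))
          = Pi.single (Sum.inr i) (1 : ℂ) := by
        funext j
        by_cases h : j = Sum.inr i
        · subst h; simp
        · simp [Pi.single_apply, h]
      have hpo := pow_mulVec_ofReal M (Pi.single (Sum.inr i) 1) k
      have hvec : Mc ^ k *ᵥ Pi.single (Sum.inr i) (1 : ℂ)
          = fun j => ((((M ^ k) *ᵥ Pi.single (Sum.inr i) 1) j : ℝ) : ℂ) := by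
        rw [← hsingle, hMc]
        exact hpo
      calc (∑ j, w j * ((((M ^ k) *ᵥ Pi.single (Sum.inr i) 1) j : ℝ) : ℂ))
          = w ⬝ᵥ (Mc ^ k *ᵥ Pi.single (Sum.inr i) (1 : ℂ)) := by rw [hvec]; rfl
        _ = ((Mc ^ k)ᵀ *ᵥ w) ⬝ᵥ Pi.single (Sum.inr i) (1 : ℂ) := by
            rw [Matrix.dotProduct_mulVec, Matrix.mulVec_transpose]
        _ = ((Mcᵀ) ^ k *ᵥ w) ⬝ᵥ Pi.single (Sum.inr i) (1 : ℂ) := by rw [Matrix.transpose_pow]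
        _ = (lam ^ k • w) ⬝ᵥ Pi.single (Sum.inr i) (1 : ℂ) := by rw [hwk]
        _ = lam ^ k * (w (Sum.inr i) * 1) := by
            rw [smul_dotProduct, dotProduct_single]; rfl
        _ = 0 := by
            have : w (Sum.inr i) = x i := rfl
            rw [this, hxD i hi]
            ring
    -- the annihilation argument over ℝ
    have hzero : ∀ c : (Fin N ⊕ Fin N) → ℝ,
        (∀ i ∈ D, ∀ k : ℕ, c ⬝ᵥ ((M ^ k) *ᵥ Pi.single (Sum.inr i) 1) = 0) → c = 0 := by
      intro c hcc
      let f : ((Fin N ⊕ Fin N) → ℝ) →ₗ[ℝ] ℝ :=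
        { toFun := fun z => c ⬝ᵥ z
          map_add' := fun a b => dotProduct_add c a b
          map_smul' := fun r a => by simp [dotProduct_smul, smul_eq_mul] }
      have hle : Submodule.span ℝ
          {v : (Fin N ⊕ Fin N) → ℝ | ∃ i ∈ D, ∃ k : ℕ, v = (M ^ k).mulVec (Pi.single (Sum.inr i) 1)}
          ≤ LinearMap.ker f := by
        rw [Submodule.span_le]
        rintro z ⟨i, hi, k, rfl⟩
        exact hcc i hi k
      rw [hasym, top_le_iff] at hle
      funext j
      have hj : Pi.single j (1:ℝ) ∈ LinearMap.ker f := hle ▸ Submodule.mem_top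
      rw [LinearMap.mem_ker] at hj
      have : c ⬝ᵥ Pi.single j 1 = 0 := hj
      rw [dotProduct_single, mul_one] at this
      exact this
    have hre0 : (fun j => (w j).re) = 0 := by
      apply hzero
      intro i hi k
      have h0 := congrArg Complex.re (hgen i hi k)
      rw [Complex.re_sum] at h0
      simp only [Complex.mul_re, Complex.ofReal_re, Complex.ofReal_im, mul_zero, sub_zero,
        Complex.zero_re] at h0
      simpa [dotProduct] using h0
    have him0 : (fun j => (w j).im) = 0 := by
      apply hzero
      intro i hi k
      have h0 := congrArg Complex.im (hgen i hi k)
      rw [Complex.im_sum] at h0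
      simp only [Complex.mul_im, Complex.ofReal_re, Complex.ofReal_im, mul_zero, add_zero,
        Complex.zero_im] at h0
      simpa [dotProduct] using h0
    obtain ⟨j₀, hj₀⟩ : ∃ j, x j ≠ 0 := by
      by_contra h
      push_neg at h
      exact hx0 (funext h)
    apply hj₀
    have e1 : (w (Sum.inr j₀)).re = 0 := congrFun hre0 (Sum.inr j₀)
    have e2 : (w (Sum.inr j₀)).im = 0 := congrFun him0 (Sum.inr j₀)
    have : w (Sum.inr j₀) = x j₀ := rfl
    rw [this] at e1 e2
    exact Complex.ext e1 e2
end

section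
/- If the network is not asymmetric, i.e. E_{M,D} ≠ ℝ^n, then M has a purely imaginary eigenvalue: there exists λ ∈ ℂ with Re λ = 0 (and λ ≠ 0) which is a root of the characteristic polynomial of M over ℂ. In particular M is not stable. -/
open Matrix


lemma eval_charpoly' {n : Type*} [Fintype n] [DecidableEq n] (A : Matrix n n ℂ) (t : ℂ) :
    A.charpoly.eval t = (t • (1 : Matrix n n ℂ) - A).det := by
  rw [Matrix.charpoly, ← Polynomial.coe_evalRingHom, RingHom.map_det]
  congr 1
  ext i j
  by_cases h : i = j <;>
    simp [Matrix.charmatrix_apply, Matrix.map_apply, Matrix.one_apply, Matrix.diagonal_apply, h]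

lemma ofReal_dot_real {n : Type*} [Fintype n] (A : Matrix n n ℝ) (a b : n → ℝ) :
    ((fun i => ((a i : ℂ))) ⬝ᵥ (A.map (Complex.ofReal ·)) *ᵥ (fun i => ((b i : ℂ))))
      = ((a ⬝ᵥ A *ᵥ b : ℝ) : ℂ) := by
  have : (A.map (Complex.ofReal ·)) *ᵥ (fun i => ((b i : ℂ))) = fun i => ((A *ᵥ b) i : ℂ) := by
    ext i
    exact (RingHom.map_mulVec Complex.ofRealHom A b i).symm
  rw [this]
  simp [dotProduct]

lemma psd_dot {n : Type*} [Fintype n] {A : Matrix n n ℝ} (hA : A.PosSemidef) (x : n → ℂ) :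
    ∃ r : ℝ, 0 ≤ r ∧ star x ⬝ᵥ ((A.map (Complex.ofReal ·)) *ᵥ x) = (r : ℂ) := by
  classical
  set a : n → ℝ := fun i => (x i).re with ha
  set b : n → ℝ := fun i => (x i).im with hb
  set ac : n → ℂ := fun i => ((a i : ℂ)) with hac
  set bc : n → ℂ := fun i => ((b i : ℂ)) with hbc
  have hx : x = ac + Complex.I • bc := by
    ext i; simp [hac, hbc, ha, hb, Complex.ext_iff, Complex.mul_re, Complex.mul_im]
  have hsx : star x = ac - Complex.I • bc := by
    ext i; simp [hac, hbc, ha, hb, Complex.ext_iff]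
  have hAt : Aᵀ = A := by
    have := hA.1; rwa [Matrix.IsHermitian, conjTranspose_eq_transpose_of_trivial] at this
  have hsymm : b ⬝ᵥ A *ᵥ a = a ⬝ᵥ A *ᵥ b := by
    rw [dotProduct_mulVec, ← mulVec_transpose, hAt, dotProduct_comm]
  refine ⟨a ⬝ᵥ A *ᵥ a + b ⬝ᵥ A *ᵥ b, by
      have := hA.dotProduct_mulVec_nonneg a; have := hA.dotProduct_mulVec_nonneg b; simp only [star_trivial] at *; positivity, ?_⟩
  rw [hx] at *
  rw [hsx]
  rw [mulVec_add, mulVec_smul, dotProduct_add, sub_dotProduct, sub_dotProduct,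
    smul_dotProduct, smul_dotProduct, dotProduct_smul, dotProduct_smul]
  rw [ofReal_dot_real, ofReal_dot_real, ofReal_dot_real, ofReal_dot_real, hsymm]
  push_cast
  ring_nf
  simp only [smul_eq_mul, ← mul_assoc, Complex.I_mul_I, Complex.I_sq]
  ring


/-- If the network is not asymmetric (`E_{M,D} ≠ ℝ^n`) then `M` has a
nonzero purely imaginary eigenvalue; in particular `M` is not stable. -/
theorem stmt2 (N : ℕ) (hN : 0 < N) (G : SimpleGraph (Fin N)) [DecidableRel G.Adj]
    (hG : G.Connected)
    (D : Finset (Fin N)) (hD : D.Nonempty)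
    (Γ : Matrix (Fin N) (Fin N) ℝ)
    (hΓ : Γ = 1 + (Matrix.diagonal (fun i => (G.degree i : ℝ)) - G.adjMatrix ℝ))
    (ID : Matrix (Fin N) (Fin N) ℝ)
    (hID : ID = Matrix.diagonal (fun i => if i ∈ D then (1 : ℝ) else 0))
    (M : Matrix (Fin N ⊕ Fin N) (Fin N ⊕ Fin N) ℝ)
    (hM : M = Matrix.fromBlocks 0 1 (-Γ) (-ID))
    (hnotasym : Submodule.span ℝ
      {v : (Fin N ⊕ Fin N) → ℝ | ∃ i ∈ D, ∃ k : ℕ, v = (M ^ k).mulVec (Pi.single (Sum.inr i) 1)}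
      ≠ ⊤) :
    ∃ lam : ℂ, lam.re = 0 ∧ lam ≠ 0 ∧ ((M.map (Complex.ofReal ·)).charpoly).IsRoot lam := by
  classical
  have hΓL : Γ = 1 + G.lapMatrix ℝ := by
    rw [hΓ, SimpleGraph.lapMatrix, SimpleGraph.degMatrix]
  have hΓsym : Γᵀ = Γ := by
    rw [hΓ]
    simp [transpose_add, transpose_sub, Matrix.transpose_one, Matrix.diagonal_transpose,
      SimpleGraph.transpose_adjMatrix]
  have hIDsym : IDᵀ = ID := by rw [hID]; simp
  -- obtain a nonzero functional vanishing on the span, and the corresponding vector `w`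
  obtain ⟨f, hf0, hfbot⟩ :=
    Submodule.exists_dual_map_eq_bot_of_lt_top (lt_top_iff_ne_top.2 hnotasym) inferInstance
  set w : (Fin N ⊕ Fin N) → ℝ := fun j => f (Pi.single j 1) with hw
  have hfd : ∀ y, f y = y ⬝ᵥ w := by
    intro y
    conv_lhs => rw [pi_eq_sum_univ y]
    rw [map_sum]
    simp only [_root_.map_smul, smul_eq_mul]
    have hsingle : ∀ x : Fin N ⊕ Fin N, (fun j => if x = j then (1:ℝ) else 0) = Pi.single x 1 := by
      intro x; ext j; simp [Pi.single_apply, eq_comm]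
    simp only [hsingle]
    rfl
  have hw0 : w ≠ 0 := by
    intro h
    apply hf0
    ext y
    simp [hfd, h]
  have horth : ∀ (k : ℕ), ∀ i ∈ D, ((M ^ k) *ᵥ Pi.single (Sum.inr i) 1) ⬝ᵥ w = 0 := by
    intro k i hi
    rw [← hfd]
    have hmem : (M ^ k) *ᵥ Pi.single (Sum.inr i) 1 ∈ Submodule.span ℝ
        {v : (Fin N ⊕ Fin N) → ℝ | ∃ i ∈ D, ∃ k : ℕ, v = (M ^ k).mulVec (Pi.single (Sum.inr i) 1)} :=
      Submodule.subset_span ⟨i, hi, k, rfl⟩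
    have h2 := Submodule.mem_map_of_mem (f := f) hmem
    rw [hfbot] at h2
    simpa using h2
  have hkey : ∀ (k : ℕ), ∀ i ∈ D, ((Mᵀ ^ k) *ᵥ w) (Sum.inr i) = 0 := by
    intro k i hi
    have h1 : ((Mᵀ ^ k) *ᵥ w) (Sum.inr i) = Pi.single (Sum.inr i) (1:ℝ) ⬝ᵥ ((Mᵀ ^ k) *ᵥ w) := by
      rw [single_dotProduct, one_mul]
    rw [h1, dotProduct_mulVec, ← mulVec_transpose, ← transpose_pow, transpose_transpose]
    exact horth k i hi
  -- complexify
  set Mc : Matrix (Fin N ⊕ Fin N) (Fin N ⊕ Fin N) ℂ := M.map (Complex.ofReal ·) with hMc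
  set wc : (Fin N ⊕ Fin N) → ℂ := fun j => ((w j : ℂ)) with hwc
  have hmapT : Mcᵀ = Mᵀ.map (Complex.ofReal ·) := by
    rw [hMc]; ext j k; rfl
  have hpowmap : ∀ k : ℕ, (Mᵀ ^ k).map (Complex.ofReal ·) = Mcᵀ ^ k := by
    intro k
    rw [hmapT]
    induction k with
    | zero => simp [pow_zero, Matrix.map_one]
    | succ k ih =>
        rw [pow_succ, pow_succ, ← ih]
        exact Matrix.map_mul (f := Complex.ofRealHom)
  have hkeyC : ∀ (k : ℕ), ∀ i ∈ D, ((Mcᵀ ^ k) *ᵥ wc) (Sum.inr i) = 0 := by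
    intro k i hi
    rw [← hpowmap k]
    have : ((Mᵀ ^ k).map (Complex.ofReal ·) *ᵥ wc) (Sum.inr i)
        = (((Mᵀ ^ k) *ᵥ w) (Sum.inr i) : ℂ) :=
      (RingHom.map_mulVec Complex.ofRealHom (Mᵀ ^ k) w (Sum.inr i)).symm
    rw [this, hkey k i hi, Complex.ofReal_zero]
  -- invariant subspace
  set W : Submodule ℂ ((Fin N ⊕ Fin N) → ℂ) :=
    Submodule.span ℂ {y | ∃ k : ℕ, y = (Mcᵀ ^ k) *ᵥ wc} with hWdef
  have hWK : ∀ y ∈ W, ∀ i ∈ D, y (Sum.inr i) = 0 := by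
    intro y hy
    induction hy using Submodule.span_induction with
    | mem y hy => obtain ⟨k, rfl⟩ := hy; exact fun i hi => hkeyC k i hi
    | zero => intro i hi; rfl
    | add a b _ _ ha hb => intro i hi; simp [Pi.add_apply, ha i hi, hb i hi]
    | smul c a _ ha => intro i hi; simp [Pi.smul_apply, ha i hi]
  set T : ((Fin N ⊕ Fin N) → ℂ) →ₗ[ℂ] ((Fin N ⊕ Fin N) → ℂ) := Matrix.mulVecLin Mcᵀ with hT
  have hTW : ∀ y ∈ W, T y ∈ W := by
    intro y hy
    induction hy using Submodule.span_induction with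
    | mem y hy =>
        obtain ⟨k, rfl⟩ := hy
        apply Submodule.subset_span
        exact ⟨k + 1, by rw [hT, Matrix.mulVecLin_apply, mulVec_mulVec, ← pow_succ']⟩
    | zero => simp
    | add a b ha hb hTa hTb => rw [map_add]; exact W.add_mem hTa hTb
    | smul c a ha hTa => rw [LinearMap.map_smul]; exact W.smul_mem c hTa
  have hwc0 : wc ≠ 0 := by
    intro h
    apply hw0
    ext j
    have := congrFun h j
    simpa [hwc] using this
  have hwcW : wc ∈ W := Submodule.subset_span ⟨0, by simp⟩
  haveI : Nontrivial W := Submodule.nontrivial_iff_ne_bot.2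
    (W.ne_bot_iff.2 ⟨wc, hwcW, hwc0⟩)
  obtain ⟨μ, hμ⟩ := Module.End.exists_eigenvalue (T.restrict hTW)
  obtain ⟨v0, hv0⟩ := hμ.exists_hasEigenvector
  set v : (Fin N ⊕ Fin N) → ℂ := (v0 : (Fin N ⊕ Fin N) → ℂ) with hv
  have hveq : Mcᵀ *ᵥ v = μ • v := by
    have h1 := hv0.apply_eq_smul
    have h2 := congrArg (Subtype.val) h1
    rw [LinearMap.restrict_apply] at h2
    exact h2
  have hvne : v ≠ 0 := by
    intro h
    exact hv0.2 (Subtype.ext h)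
  have hvK : ∀ i ∈ D, v (Sum.inr i) = 0 := fun i hi => hWK v v0.2 i hi
  -- block structure
  set Γc : Matrix (Fin N) (Fin N) ℂ := Γ.map (Complex.ofReal ·) with hΓc
  set IDc : Matrix (Fin N) (Fin N) ℂ := ID.map (Complex.ofReal ·) with hIDc
  have hΓsym' : ∀ j k, Γ k j = Γ j k := by
    intro j k
    have := congrFun (congrFun hΓsym k) j
    rw [Matrix.transpose_apply] at this; exact this.symm
  have hIDsym' : ∀ j k, ID k j = ID j k := by
    intro j k
    have := congrFun (congrFun hIDsym k) j
    rw [Matrix.transpose_apply] at this; exact this.symm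
  have hMcT : Mcᵀ = fromBlocks 0 (-Γc) 1 (-IDc) := by
    rw [hmapT, hM]
    ext j k
    cases j <;> cases k <;>
      simp [Matrix.map_apply, Matrix.transpose_apply, fromBlocks, Matrix.one_apply, hΓc, hIDc,
        hΓsym', hIDsym', eq_comm, apply_ite (Complex.ofReal ·)]
  set u : Fin N → ℂ := fun i => v (Sum.inl i) with hu
  set xx : Fin N → ℂ := fun i => v (Sum.inr i) with hxx
  have hvelim : v = Sum.elim u xx := by funext j; cases j <;> rfl
  have hblock := hveq
  rw [hMcT, hvelim, fromBlocks_mulVec] at hblock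
  have hIDx : IDc *ᵥ xx = 0 := by
    funext i
    rw [hIDc, hID]
    rw [Matrix.diagonal_map (by simp)]
    rw [mulVec_diagonal]
    by_cases hi : i ∈ D
    · have : xx i = 0 := hvK i hi
      simp [this]
    · simp [hi]
  have h1 : -(Γc *ᵥ xx) = μ • u := by
    funext i
    have := congrFun hblock (Sum.inl i)
    simpa [zero_mulVec, neg_mulVec] using this
  have hux : u = μ • xx := by
    funext i
    have := congrFun hblock (Sum.inr i)
    simpa [one_mulVec, neg_mulVec, hIDx] using this
  have hΓx : Γc *ᵥ xx = (-(μ ^ 2)) • xx := by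
    have h2 : Γc *ᵥ xx = -(μ • (μ • xx)) := by
      rw [← hux, ← h1, neg_neg]
    rw [h2, smul_smul, ← neg_smul, pow_two]
  have hxx0 : xx ≠ 0 := by
    intro h
    apply hvne
    rw [hvelim, h, hux, h]
    simp
  -- quadratic form argument
  have hΓdec : Γc = 1 + (G.lapMatrix ℝ).map (Complex.ofReal ·) := by
    rw [hΓc, hΓL]
    ext j k
    simp [Matrix.map_apply, Matrix.add_apply, Matrix.one_apply, apply_ite (Complex.ofReal ·)]
  obtain ⟨r, hr0, hrval⟩ := psd_dot (SimpleGraph.posSemidef_lapMatrix ℝ G) xx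
  set s : ℝ := ∑ i, Complex.normSq (xx i) with hs
  have hsval : star xx ⬝ᵥ xx = (s : ℂ) := by
    rw [hs]
    push_cast
    simp only [dotProduct, Pi.star_apply]
    exact Finset.sum_congr rfl fun i _ => by
      rw [mul_comm]
      exact Complex.mul_conj (xx i)
  have hspos : 0 < s := by
    have hxi : ∃ i, xx i ≠ 0 := by
      by_contra h
      push_neg at h
      exact hxx0 (funext h)
    obtain ⟨i0, hi0⟩ := hxi
    refine lt_of_lt_of_le (Complex.normSq_pos.2 hi0) ?_
    exact Finset.single_le_sum (fun i _ => Complex.normSq_nonneg _) (Finset.mem_univ i0)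
  have hquad : (-(μ ^ 2)) * (s : ℂ) = (s : ℂ) + (r : ℂ) := by
    have h3 : star xx ⬝ᵥ (Γc *ᵥ xx) = (-(μ ^ 2)) * (s : ℂ) := by
      rw [hΓx, dotProduct_smul, smul_eq_mul, hsval]
    have h4 : star xx ⬝ᵥ (Γc *ᵥ xx) = (s : ℂ) + (r : ℂ) := by
      rw [hΓdec, Matrix.add_mulVec, Matrix.one_mulVec, dotProduct_add, hsval, hrval]
    rw [← h3, h4]
  set t : ℝ := (s + r) / s with htdef
  have htpos : 0 < t := div_pos (by linarith) hspos
  have hsne : (s : ℂ) ≠ 0 := by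
    simpa using (Complex.ofReal_ne_zero.2 hspos.ne')
  have hμ2 : μ ^ 2 = ((-t : ℝ) : ℂ) := by
    rw [htdef]
    push_cast
    field_simp
    linear_combination -(hquad)
  have hre : (μ ^ 2).re = -t := by rw [hμ2]; simp
  have him : (μ ^ 2).im = 0 := by rw [hμ2]; simp
  have h5 : μ.re * μ.re - μ.im * μ.im = -t := by
    simpa [pow_two, Complex.mul_re] using hre
  have h6 : μ.re * μ.im + μ.im * μ.re = 0 := by
    simpa [pow_two, Complex.mul_im] using him
  have h7 : μ.re * μ.im = 0 := by linear_combination h6 / 2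
  have hre0 : μ.re = 0 := by
    rcases mul_eq_zero.mp h7 with h | h
    · exact h
    · exfalso
      rw [h] at h5
      nlinarith [sq_nonneg μ.re]
  have hne0 : μ ≠ 0 := by
    intro h
    rw [h] at hμ2
    have : ((0 : ℝ) : ℂ) = ((-t : ℝ) : ℂ) := by simpa using hμ2
    have := Complex.ofReal_injective this
    linarith
  refine ⟨μ, hre0, hne0, ?_⟩
  have hdet : (μ • (1 : Matrix (Fin N ⊕ Fin N) (Fin N ⊕ Fin N) ℂ) - Mcᵀ).det = 0 :=
    Matrix.exists_mulVec_eq_zero_iff.mp ⟨v, hvne, by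
      rw [sub_mulVec, smul_mulVec, one_mulVec, hveq, sub_self]⟩
  have hdet2 : (μ • (1 : Matrix (Fin N ⊕ Fin N) (Fin N ⊕ Fin N) ℂ) - Mc).det = 0 := by
    rw [← Matrix.det_transpose]
    simpa [transpose_sub, transpose_smul, transpose_one] using hdet
  show (Mc.charpoly).IsRoot μ
  unfold Polynomial.IsRoot
  rw [eval_charpoly']
  exact hdet2
end

section
/- If the network is asymmetric, i.e. E_{M,D} = ℝ^n, then the noise-free linear dynamics is exponentially contracting: there exist constants C ≥ 1 and α > 0 such that for every t ≥ 0 and every z ∈ ℝ^n, ‖exp(tM) z‖ ≤ C e^{−α t} ‖z‖. -/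
open scoped MatrixOrder Matrix.Norms.L2Operator in
lemma posSemidef_eq_star_mul_self_aux {ι : Type*} [Fintype ι] [DecidableEq ι] (Lr : Matrix ι ι ℝ)
    (hL : Lr.PosSemidef) : ∃ B : Matrix ι ι ℝ, Lr = Matrix.transpose B * B := by
  obtain ⟨B, hB⟩ := CStarAlgebra.nonneg_iff_eq_star_mul_self.mp hL.nonneg
  exact ⟨B, by rw [hB, Matrix.star_eq_conjTranspose, Matrix.conjTranspose_eq_transpose_of_trivial]⟩

section Aux

open Matrix NormedSpace
open scoped ENNReal NNReal

set_option maxHeartbeats 1000000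

attribute [local instance] Matrix.linftyOpSeminormedAddCommGroup Matrix.linftyOpNormedAddCommGroup
  Matrix.linftyOpNonUnitalSemiNormedRing Matrix.linftyOpSemiNormedRing
  Matrix.linftyOpNonUnitalNormedRing Matrix.linftyOpNormedRing
  Matrix.linftyOpNormedSpace Matrix.linftyOpNormedAlgebra

set_option linter.unusedSectionVars false
set_option linter.unusedVariables false

section Small
variable {ι : Type*} [Fintype ι] [DecidableEq ι]

-- complexification of mulVec
lemma coe_mulVec' (A : Matrix ι ι ℝ) (z : ι → ℝ) :
    (fun j => (((A.mulVec z) j : ℝ) : ℂ)) = (A.map ((↑) : ℝ → ℂ)).mulVec (fun j => (z j : ℂ)) := by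
  funext j
  simp [Matrix.mulVec, dotProduct, Matrix.map_apply]

lemma map_pow_coe' (A : Matrix ι ι ℝ) (k : ℕ) :
    (A ^ k).map ((↑) : ℝ → ℂ) = (A.map ((↑) : ℝ → ℂ)) ^ k := by
  exact map_pow (Complex.ofRealHom.mapMatrix : Matrix ι ι ℝ →+* Matrix ι ι ℂ) A k

lemma real_dot_nonneg' (Lr : Matrix ι ι ℝ) (hL : Lr.PosSemidef) (v : ι → ℂ) :
    ∃ r : ℝ, 0 ≤ r ∧ star v ⬝ᵥ ((Lr.map ((↑) : ℝ → ℂ)).mulVec v) = (r : ℂ) := by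
  obtain ⟨B, hB⟩ := posSemidef_eq_star_mul_self_aux Lr hL
  set Bc := B.map ((↑) : ℝ → ℂ) with hBc
  have hmap : Lr.map ((↑) : ℝ → ℂ) = Bcᴴ * Bc := by
    rw [hB]
    ext i j
    simp [hBc, Matrix.mul_apply, Matrix.map_apply, Matrix.conjTranspose_apply,
      Complex.conj_ofReal]
  rw [hmap]
  have : star v ⬝ᵥ ((Bcᴴ * Bc).mulVec v) = star (Bc.mulVec v) ⬝ᵥ (Bc.mulVec v) := by
    rw [← Matrix.mulVec_mulVec, dotProduct_mulVec, ← Matrix.star_mulVec]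
  rw [this]
  refine ⟨∑ i, Complex.normSq ((Bc.mulVec v) i), Finset.sum_nonneg fun i _ => Complex.normSq_nonneg _, ?_⟩
  simp [dotProduct, Pi.star_apply, Complex.normSq_eq_conj_mul_self, RCLike.star_def]


lemma pow_mulVec_eigen (A : Matrix ι ι ℂ) (x : ι → ℂ) (μ : ℂ) (h : A.mulVec x = μ • x) :
    ∀ k : ℕ, (A ^ k).mulVec x = μ ^ k • x := by
  intro k
  induction k with
  | zero => simp
  | succ n ih =>
    rw [pow_succ, ← Matrix.mulVec_mulVec, h, Matrix.mulVec_smul, ih, smul_smul, ← pow_succ']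

lemma exp_mulVec_eigen' (A : Matrix ι ι ℂ) (x : ι → ℂ) (μ : ℂ) (h : A.mulVec x = μ • x) :
    (exp A).mulVec x = Complex.exp μ • x := by
  classical
  let L : Matrix ι ι ℂ →ₗ[ℂ] (ι → ℂ) :=
    { toFun := fun B => B.mulVec x
      map_add' := fun B C => Matrix.add_mulVec B C x
      map_smul' := fun c B => Matrix.smul_mulVec c B x }
  let L' : Matrix ι ι ℂ →L[ℂ] (ι → ℂ) := LinearMap.toContinuousLinearMap L
  have hsum : Summable (fun n : ℕ => ((Nat.factorial n : ℂ))⁻¹ • A ^ n) := expSeries_summable' A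
  have h1 : (exp A).mulVec x = ∑' n : ℕ, ((Nat.factorial n : ℂ))⁻¹ • ((A ^ n).mulVec x) := by
    have := L'.map_tsum hsum
    simpa [L', L, exp_eq_tsum ℂ] using this
  have h2 : ∀ n : ℕ, ((Nat.factorial n : ℂ))⁻¹ • ((A ^ n).mulVec x) = (((Nat.factorial n : ℂ))⁻¹ * μ ^ n) • x := by
    intro n; rw [pow_mulVec_eigen A x μ h n, smul_smul]
  rw [h1]
  simp_rw [h2]
  rw [Summable.tsum_smul_const]
  · congr 1
    rw [Complex.exp_eq_exp_ℂ, exp_eq_tsum ℂ]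
    simp [smul_eq_mul]
  · simpa [smul_eq_mul] using expSeries_summable' (𝕂 := ℂ) μ


lemma exists_eigenvalue_exp' {A : Matrix ι ι ℂ} {μ : ℂ} {y : ι → ℂ} (hy : y ≠ 0)
    (h : (exp A).mulVec y = μ • y) :
    ∃ lam : ℂ, (∃ x : ι → ℂ, x ≠ 0 ∧ A.mulVec x = lam • x) ∧ μ = Complex.exp lam := by
  classical
  set W : Submodule ℂ (ι → ℂ) :=
    LinearMap.ker ((exp A).mulVecLin - μ • LinearMap.id) with hW
  have memW : ∀ z : ι → ℂ, z ∈ W ↔ (exp A).mulVec z = μ • z := by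
    intro z
    simp [hW, LinearMap.mem_ker, LinearMap.sub_apply, Matrix.mulVecLin_apply, sub_eq_zero]
  have hyW : y ∈ W := (memW y).mpr h
  haveI : Nontrivial W := Submodule.nontrivial_iff_ne_bot.mpr
    (by
      intro hbot
      rw [hbot] at hyW
      exact hy (Submodule.mem_bot ℂ |>.mp hyW))
  have hstab : ∀ z ∈ W, A.mulVecLin z ∈ W := by
    intro z hz
    have hz' : (exp A).mulVec z = μ • z := (memW z).mp hz
    rw [memW]
    have hcomm : A * exp A = exp A * A := (Commute.refl A).exp_right.eq
    rw [Matrix.mulVecLin_apply, Matrix.mulVec_mulVec, ← hcomm, ← Matrix.mulVec_mulVec, hz',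
      Matrix.mulVec_smul]
  let T : Module.End ℂ W := (A.mulVecLin).restrict hstab
  obtain ⟨lam, hlam⟩ := Module.End.exists_eigenvalue T
  obtain ⟨x0, hx0⟩ := hlam.exists_hasEigenvector
  have hx0eq : T x0 = lam • x0 := Module.End.mem_eigenspace_iff.mp hx0.1
  have hx0coe : A.mulVec (x0 : ι → ℂ) = lam • (x0 : ι → ℂ) := by
    have := congrArg (Subtype.val) hx0eq
    simpa [T, LinearMap.restrict_apply, Matrix.mulVecLin_apply] using this
  have hx0ne : (x0 : ι → ℂ) ≠ 0 := fun h0 => hx0.2 (Subtype.ext h0)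
  refine ⟨lam, ⟨(x0 : ι → ℂ), hx0ne, hx0coe⟩, ?_⟩
  have h1 : (exp A).mulVec (x0 : ι → ℂ) = μ • (x0 : ι → ℂ) := (memW _).mp x0.2
  have h2 : (exp A).mulVec (x0 : ι → ℂ) = Complex.exp lam • (x0 : ι → ℂ) :=
    exp_mulVec_eigen' A _ lam hx0coe
  obtain ⟨j, hj⟩ := Function.ne_iff.mp hx0ne
  have := congrFun (h1.symm.trans h2) j
  simp only [Pi.smul_apply, smul_eq_mul] at this
  exact mul_right_cancel₀ (by simpa using hj) this


end Small

lemma hurwitz' (N : ℕ) (G : SimpleGraph (Fin N)) [DecidableRel G.Adj]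
    (D : Finset (Fin N))
    (Γ : Matrix (Fin N) (Fin N) ℝ)
    (hΓ : Γ = 1 + (Matrix.diagonal (fun i => (G.degree i : ℝ)) - G.adjMatrix ℝ))
    (ID : Matrix (Fin N) (Fin N) ℝ)
    (hID : ID = Matrix.diagonal (fun i => if i ∈ D then (1 : ℝ) else 0))
    (M : Matrix (Fin N ⊕ Fin N) (Fin N ⊕ Fin N) ℝ)
    (hM : M = Matrix.fromBlocks 0 1 (-Γ) (-ID))
    (hasym : Submodule.span ℝ
      {v : (Fin N ⊕ Fin N) → ℝ | ∃ i ∈ D, ∃ k : ℕ, v = (M ^ k).mulVec (Pi.single (Sum.inr i) 1)}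
      = ⊤)
    (μ : ℂ) (x : (Fin N ⊕ Fin N) → ℂ) (hx : x ≠ 0)
    (hμ : (M.map ((↑) : ℝ → ℂ)).mulVec x = μ • x) : μ.re < 0 := by
  classical
  set Mc := M.map ((↑) : ℝ → ℂ) with hMc
  set Γc := Γ.map ((↑) : ℝ → ℂ) with hΓc
  set IDc := ID.map ((↑) : ℝ → ℂ) with hIDc
  -- obtain a left eigenvector
  have hdet : (μ • 1 - Mc).det = 0 := by
    rw [← Matrix.exists_mulVec_eq_zero_iff]
    refine ⟨x, hx, ?_⟩
    rw [Matrix.sub_mulVec, Matrix.smul_mulVec, Matrix.one_mulVec, hμ, sub_self]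
  have hdetT : ((μ • 1 - Mc)ᵀ).det = 0 := by rw [Matrix.det_transpose]; exact hdet
  obtain ⟨w, hw0, hww⟩ := Matrix.exists_mulVec_eq_zero_iff.mpr hdetT
  have hwT : Mcᵀ.mulVec w = μ • w := by
    rw [Matrix.transpose_sub, Matrix.transpose_smul, Matrix.transpose_one, Matrix.sub_mulVec,
      Matrix.smul_mulVec, Matrix.one_mulVec, sub_eq_zero] at hww
    exact hww.symm
  -- blocks
  set u : Fin N → ℂ := fun i => w (Sum.inl i) with hu
  set v : Fin N → ℂ := fun i => w (Sum.inr i) with hv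
  have hwelim : w = Sum.elim u v := by funext j; cases j <;> rfl
  have hΓsymm : Γᵀ = Γ := by
    rw [hΓ]
    simp [Matrix.transpose_add, Matrix.transpose_sub, Matrix.diagonal_transpose]
  have hΓ' : ∀ i j, Γ j i = Γ i j := fun i j => congrFun (congrFun hΓsymm i) j
  have hIDsymm : IDᵀ = ID := by rw [hID, Matrix.diagonal_transpose]
  have hID' : ∀ i j, ID j i = ID i j := fun i j => congrFun (congrFun hIDsymm i) j
  have hMcT : Mcᵀ = Matrix.fromBlocks 0 (-Γc) 1 (-IDc) := by
    rw [hMc, hM]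
    ext i j
    cases i with
    | inl i =>
      cases j with
      | inl j => simp [Matrix.map_apply]
      | inr j => simp [Matrix.map_apply, hΓc, hΓ' i j]
    | inr i =>
      cases j with
      | inl j => simp [Matrix.map_apply, Matrix.one_apply, eq_comm, apply_ite ((↑) : ℝ → ℂ)]
      | inr j => simp [Matrix.map_apply, hIDc, hID' i j]
  have key := hwT
  rw [hMcT, hwelim, Matrix.fromBlocks_mulVec] at key
  have eq1 : -(Γc.mulVec v) = μ • u := by
    funext i
    have := congrFun key (Sum.inl i)
    simpa [Matrix.neg_mulVec, Matrix.zero_mulVec] using this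
  have eq2 : u - IDc.mulVec v = μ • v := by
    funext i
    have := congrFun key (Sum.inr i)
    simpa [Matrix.neg_mulVec, Matrix.one_mulVec, sub_eq_add_neg] using this
  have hv0 : v ≠ 0 := by
    intro h0
    apply hw0
    have hu0 : u = 0 := by
      have := eq2
      rw [h0] at this
      simpa [Matrix.mulVec_zero] using this
    rw [hwelim, hu0, h0]
    funext j; cases j <;> rfl
  -- scalars
  set S : ℂ := star v ⬝ᵥ v with hS
  set dd : ℂ := star v ⬝ᵥ (IDc.mulVec v) with hdd
  set gg : ℂ := star v ⬝ᵥ (Γc.mulVec v) with hgg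
  have quad : μ ^ 2 * S + μ * dd + gg = 0 := by
    have h1 : Γc.mulVec v = -(μ • u) := by
      rw [← eq1, neg_neg]
    have h2 : u = μ • v + IDc.mulVec v := by
      rw [← eq2]; abel
    rw [hgg, h1, h2]
    simp only [dotProduct_neg, dotProduct_smul, dotProduct_add,
      smul_eq_mul]
    rw [hS, hdd]
    ring
  -- realness
  set s : ℝ := ∑ i, Complex.normSq (v i) with hs
  have hSs : S = (s : ℂ) := by
    rw [hS, hs]
    simp [dotProduct, Pi.star_apply, Complex.normSq_eq_conj_mul_self, RCLike.star_def]
  have hspos : 0 < s := by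
    obtain ⟨j, hj⟩ := Function.ne_iff.mp hv0
    rw [hs]
    refine Finset.sum_pos' (fun i _ => Complex.normSq_nonneg _) ⟨j, Finset.mem_univ j, ?_⟩
    simpa [Complex.normSq_pos] using hj
  set d : ℝ := ∑ i, if i ∈ D then Complex.normSq (v i) else 0 with hd
  have hIDc_diag : IDc = Matrix.diagonal (fun i => if i ∈ D then (1:ℂ) else 0) := by
    rw [hIDc, hID]
    ext i j
    rcases eq_or_ne i j with rfl | hne
    · simp [Matrix.map_apply, apply_ite ((↑) : ℝ → ℂ)]
    · simp [Matrix.map_apply, Matrix.diagonal_apply_ne _ hne]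
  have hddd : dd = (d : ℂ) := by
    rw [hdd, hIDc_diag, hd]
    simp only [dotProduct, Matrix.mulVec_diagonal, Pi.star_apply, RCLike.star_def]
    push_cast
    refine Finset.sum_congr rfl fun i _ => ?_
    rcases em (i ∈ D) with hi | hi
    · simp only [hi, if_true, Complex.normSq_eq_conj_mul_self]
      ring
    · simp [hi]
  have hdnonneg : 0 ≤ d := by
    rw [hd]
    exact Finset.sum_nonneg fun i _ => by by_cases hi : i ∈ D <;> simp [hi, Complex.normSq_nonneg]
  -- gg = s + r with r ≥ 0
  have hL : (Matrix.diagonal (fun i => (G.degree i : ℝ)) - G.adjMatrix ℝ).PosSemidef := by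
    have : Matrix.diagonal (fun i => (G.degree i : ℝ)) - G.adjMatrix ℝ = G.lapMatrix ℝ := by
      rfl
    rw [this]
    exact SimpleGraph.posSemidef_lapMatrix ℝ G
  obtain ⟨r, hrnonneg, hr⟩ := real_dot_nonneg' _ hL v
  have hggr : gg = ((s + r : ℝ) : ℂ) := by
    have hΓdec : Γc = 1 + ((Matrix.diagonal (fun i => (G.degree i : ℝ)) - G.adjMatrix ℝ).map ((↑) : ℝ → ℂ)) := by
      rw [hΓc, hΓ]
      ext i j
      rcases eq_or_ne i j with rfl | hne
      · simp [Matrix.map_apply, Matrix.one_apply]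
      · simp [Matrix.map_apply, Matrix.one_apply_ne hne]
    rw [hgg, hΓdec, Matrix.add_mulVec, Matrix.one_mulVec, dotProduct_add, ← hS, hSs, hr]
    push_cast
    ring
  -- real/imaginary parts
  have quad' : μ ^ 2 * (s : ℂ) + μ * (d : ℂ) + ((s + r : ℝ) : ℂ) = 0 := by
    rw [← hSs, ← hddd, ← hggr]; exact quad
  set a : ℝ := μ.re with ha
  set b : ℝ := μ.im with hb
  have hre : (a * a - b * b) * s + a * d + (s + r) = 0 := by
    have := congrArg Complex.re quad'
    simpa [pow_two, Complex.add_re, Complex.mul_re, Complex.mul_im, Complex.ofReal_re,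
      Complex.ofReal_im] using this
  have him : (a * b + b * a) * s + b * d = 0 := by
    have := congrArg Complex.im quad'
    simpa [pow_two, Complex.add_im, Complex.mul_re, Complex.mul_im, Complex.ofReal_re,
      Complex.ofReal_im] using this
  by_contra hcon
  push_neg at hcon
  -- hcon : 0 ≤ a
  rcases eq_or_ne b 0 with hb0 | hb0
  · rw [hb0] at hre
    nlinarith
  · have hfac : b * (2 * a * s + d) = 0 := by nlinarith [him]
    have h2asd : 2 * a * s + d = 0 := by
      rcases mul_eq_zero.mp hfac with h | h
      · exact absurd h hb0
      · exact h
    have ha0 : a = 0 := by nlinarith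
    have hd0 : d = 0 := by rw [ha0] at h2asd; linarith
    -- v vanishes on D
    have hsum0 : (∑ j, if j ∈ D then Complex.normSq (v j) else 0) = 0 := by
      rw [← hd]; exact hd0
    have hvD : ∀ i ∈ D, v i = 0 := by
      intro i hi
      have hall := (Finset.sum_eq_zero_iff_of_nonneg
        (fun j (_ : j ∈ Finset.univ) => by
          by_cases hj : j ∈ D <;> simp [hj, Complex.normSq_nonneg])).mp hsum0
      have := hall i (Finset.mem_univ i)
      rw [if_pos hi] at this
      exact Complex.normSq_eq_zero.mp this
    -- left eigenvector relations and contradiction with hasym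
    have hvmul : w ᵥ* Mc = μ • w := by rw [← Matrix.mulVec_transpose]; exact hwT
    have hvmulpow : ∀ k : ℕ, w ᵥ* (Mc ^ k) = μ ^ k • w := by
      intro k
      induction k with
      | zero => simp [Matrix.vecMul_one]
      | succ n ih =>
        rw [pow_succ, ← Matrix.vecMul_vecMul, ih, Matrix.smul_vecMul, hvmul, smul_smul,
          ← pow_succ]
    let φ : ((Fin N ⊕ Fin N) → ℝ) →ₗ[ℝ] ℂ :=
      { toFun := fun z => w ⬝ᵥ fun j => (z j : ℂ)
        map_add' := fun z1 z2 => by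
          simp only [dotProduct, Pi.add_apply, Complex.ofReal_add]
          rw [← Finset.sum_add_distrib]
          exact Finset.sum_congr rfl fun j _ => by ring
        map_smul' := fun c z => by
          simp only [dotProduct, Pi.smul_apply, smul_eq_mul, Complex.ofReal_mul,
            RingHom.id_apply, Complex.real_smul, Finset.mul_sum]
          exact Finset.sum_congr rfl fun j _ => by ring }
    have hker : {v' : (Fin N ⊕ Fin N) → ℝ |
        ∃ i ∈ D, ∃ k : ℕ, v' = (M ^ k).mulVec (Pi.single (Sum.inr i) 1)} ⊆
        (LinearMap.ker φ : Set _) := by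
      rintro _ ⟨i, hiD, k, rfl⟩
      simp only [SetLike.mem_coe, LinearMap.mem_ker]
      have hsingle : (fun j => (((Pi.single (Sum.inr i) 1 : (Fin N ⊕ Fin N) → ℝ)) j : ℂ)) =
          Pi.single (Sum.inr i) (1:ℂ) := by
        funext j
        rcases eq_or_ne j (Sum.inr i) with rfl | hne
        · simp
        · simp [Pi.single_eq_of_ne hne]
      have hstep : φ ((M ^ k).mulVec (Pi.single (Sum.inr i) 1)) =
          w ⬝ᵥ ((Mc ^ k).mulVec (Pi.single (Sum.inr i) (1:ℂ))) := by
        show (w ⬝ᵥ fun j => (((M ^ k).mulVec (Pi.single (Sum.inr i) 1)) j : ℂ)) = _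
        rw [coe_mulVec', map_pow_coe', hsingle, hMc]
      rw [hstep, dotProduct_mulVec, hvmulpow k, smul_dotProduct,
        dotProduct_single]
      have hwi : w (Sum.inr i) = 0 := hvD i hiD
      rw [hwi]
      simp
    have hle : (⊤ : Submodule ℝ ((Fin N ⊕ Fin N) → ℝ)) ≤ LinearMap.ker φ := by
      rw [← hasym]; exact Submodule.span_le.mpr hker
    have hφ0 : φ = 0 := LinearMap.ker_eq_top.mp (le_antisymm le_top hle)
    apply hw0
    funext j
    have hφj : φ (Pi.single j 1) = 0 := by rw [hφ0]; rfl
    have hval : φ (Pi.single j 1) = w j := by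
      show (w ⬝ᵥ fun j' => (((Pi.single j 1 : (Fin N ⊕ Fin N) → ℝ)) j' : ℂ)) = w j
      have hsingle : (fun j' => (((Pi.single j 1 : (Fin N ⊕ Fin N) → ℝ)) j' : ℂ)) =
          Pi.single j (1:ℂ) := by
        funext j'
        rcases eq_or_ne j' j with rfl | hne
        · simp
        · simp [Pi.single_eq_of_ne hne]
      rw [hsingle, dotProduct_single, mul_one]
    rw [← hval, hφj]
    rfl



theorem stmt3_aux (N : ℕ) (hN : 0 < N) (G : SimpleGraph (Fin N)) [DecidableRel G.Adj]
    (hG : G.Connected)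
    (D : Finset (Fin N)) (hD : D.Nonempty)
    (Γ : Matrix (Fin N) (Fin N) ℝ)
    (hΓ : Γ = 1 + (Matrix.diagonal (fun i => (G.degree i : ℝ)) - G.adjMatrix ℝ))
    (ID : Matrix (Fin N) (Fin N) ℝ)
    (hID : ID = Matrix.diagonal (fun i => if i ∈ D then (1 : ℝ) else 0))
    (M : Matrix (Fin N ⊕ Fin N) (Fin N ⊕ Fin N) ℝ)
    (hM : M = Matrix.fromBlocks 0 1 (-Γ) (-ID))
    (hasym : Submodule.span ℝ
      {v : (Fin N ⊕ Fin N) → ℝ | ∃ i ∈ D, ∃ k : ℕ, v = (M ^ k).mulVec (Pi.single (Sum.inr i) 1)}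
      = ⊤) :
    ∃ C : ℝ, 1 ≤ C ∧ ∃ α : ℝ, 0 < α ∧ ∀ t : ℝ, 0 ≤ t → ∀ z : (Fin N ⊕ Fin N) → ℝ,
      ‖(NormedSpace.exp (t • M)).mulVec z‖ ≤ C * Real.exp (-α * t) * ‖z‖ := by
  classical
  haveI : Nonempty (Fin N) := ⟨⟨0, hN⟩⟩
  set Mc : Matrix (Fin N ⊕ Fin N) (Fin N ⊕ Fin N) ℂ := M.map ((↑) : ℝ → ℂ) with hMcdef
  set B : Matrix (Fin N ⊕ Fin N) (Fin N ⊕ Fin N) ℂ := exp Mc with hB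
  -- all elements of the spectrum of B have norm < 1
  have hspec : ∀ zz ∈ spectrum ℂ B, ‖zz‖₊ < 1 := by
    intro zz hzz
    rw [spectrum.mem_iff, Algebra.algebraMap_eq_smul_one] at hzz
    have hdet0 : (zz • (1 : Matrix (Fin N ⊕ Fin N) (Fin N ⊕ Fin N) ℂ) - B).det = 0 := by
      by_contra hd
      exact hzz ((Matrix.isUnit_iff_isUnit_det _).mpr (isUnit_iff_ne_zero.mpr hd))
    obtain ⟨y, hy0, hy⟩ := Matrix.exists_mulVec_eq_zero_iff.mpr hdet0
    have hyB : B.mulVec y = zz • y := by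
      rw [Matrix.sub_mulVec, Matrix.smul_mulVec, Matrix.one_mulVec, sub_eq_zero] at hy
      exact hy.symm
    obtain ⟨lam, ⟨xv, hxv0, hxveig⟩, hzzlam⟩ := exists_eigenvalue_exp' hy0 hyB
    have hre : lam.re < 0 := hurwitz' N G D Γ hΓ ID hID M hM hasym lam xv hxv0 hxveig
    have : ‖zz‖ < 1 := by
      rw [hzzlam, Complex.norm_exp]
      exact Real.exp_lt_one_iff.mpr hre
    exact_mod_cast this
  have hrad : spectralRadius ℂ B < 1 := by
    have := spectrum.spectralRadius_lt_of_forall_lt (a := B) (r := 1) hspec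
    simpa using this
  -- Gelfand's formula: find m with ‖B ^ m‖ < 1
  obtain ⟨m, hm1, hqlt⟩ : ∃ m : ℕ, 1 ≤ m ∧ ‖B ^ m‖ < 1 := by
    have hGel := spectrum.pow_nnnorm_pow_one_div_tendsto_nhds_spectralRadius B
    have hev := hGel.eventually_lt_const hrad
    obtain ⟨m, hm1, hm⟩ := ((hev.and (Filter.eventually_ge_atTop 1)).exists)
    refine ⟨m, hm, ?_⟩
    by_contra hge
    push_neg at hge
    have h1 : (1 : ℝ≥0∞) ≤ (‖B ^ m‖₊ : ℝ≥0∞) := by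
      rw [← ENNReal.coe_one, ENNReal.coe_le_coe]
      exact_mod_cast hge
    have h2 : (1 : ℝ≥0∞) ≤ (‖B ^ m‖₊ : ℝ≥0∞) ^ (1 / (m:ℝ)) := by
      calc (1 : ℝ≥0∞) = 1 ^ (1 / (m:ℝ)) := (ENNReal.one_rpow _).symm
        _ ≤ (‖B ^ m‖₊ : ℝ≥0∞) ^ (1 / (m:ℝ)) := ENNReal.rpow_le_rpow h1 (by positivity)
    exact absurd hm1 (not_lt.mpr h2)
  set q : ℝ := ‖B ^ m‖ with hq
  have hBunit : IsUnit B := Matrix.isUnit_exp Mc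
  have hBm0 : B ^ m ≠ 0 := (hBunit.pow m).ne_zero
  have hq0 : 0 < q := by rw [hq]; exact norm_pos_iff.mpr hBm0
  have hcont : Continuous fun t : ℝ => exp ((t : ℂ) • Mc) :=
    exp_continuous.comp ((Complex.continuous_ofReal).smul continuous_const)
  obtain ⟨K, hK⟩ := (isCompact_Icc (a := (0:ℝ)) (b := (m:ℝ))).exists_bound_of_continuousOn
    hcont.continuousOn
  have hm0 : (0:ℝ) < m := by exact_mod_cast hm1
  have hK1 : 1 ≤ K := by
    have h0m : (0:ℝ) ∈ Set.Icc (0:ℝ) (m:ℝ) := ⟨le_refl 0, le_of_lt hm0⟩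
    have := hK 0 h0m
    rw [show ((0:ℝ):ℂ) • Mc = 0 by simp, exp_zero, norm_one] at this
    exact this
  set α : ℝ := -Real.log q / m with hα
  have hlogq : Real.log q < 0 := Real.log_neg hq0 hqlt
  have hαpos : 0 < α := by
    rw [hα]; apply div_pos (by linarith) hm0
  refine ⟨K / q, ?_, α, hαpos, ?_⟩
  · rw [le_div_iff₀ hq0]; nlinarith
  intro t ht z
  set k : ℕ := ⌊t / m⌋₊ with hk
  have hfl : (k:ℝ) ≤ t / m := by rw [hk]; exact Nat.floor_le (by positivity)
  have hfl2 : t / m < (k:ℝ) + 1 := by rw [hk]; exact Nat.lt_floor_add_one _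
  have hkm : (k:ℝ) * m ≤ t := by
    calc (k:ℝ) * m ≤ (t/m) * m := by nlinarith
      _ = t := by field_simp
  have hkm2 : t < ((k:ℝ)+1) * m := by
    calc t = (t/m) * m := by field_simp
      _ < ((k:ℝ)+1) * m := by nlinarith
  have hsplit : exp ((t:ℂ) • Mc) = exp (((t - k*m : ℝ):ℂ) • Mc) * (B ^ m) ^ k := by
    have hpow : (B ^ m) ^ k = exp (((m*k : ℕ):ℂ) • Mc) := by
      rw [← pow_mul, show ((m*k : ℕ):ℂ) • Mc = (m*k : ℕ) • Mc from Nat.cast_smul_eq_nsmul ℂ _ _,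
        Matrix.exp_nsmul]
    rw [hpow, ← Matrix.exp_add_of_commute]
    · congr 1
      rw [← add_smul]
      congr 1
      push_cast
      ring
    · exact ((Commute.refl Mc).smul_left _).smul_right _
  have hnorm1 : ‖exp (((t - k*m : ℝ):ℂ) • Mc)‖ ≤ K := by
    apply hK
    constructor
    · linarith
    · nlinarith
  have hqk : ‖(B ^ m) ^ k‖ ≤ q ^ k := norm_pow_le _ _
  have hEt : ‖exp ((t:ℂ) • Mc)‖ ≤ K * q ^ k := by
    rw [hsplit]
    calc ‖exp (((t - k*m : ℝ):ℂ) • Mc) * (B ^ m) ^ k‖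
        ≤ ‖exp (((t - k*m : ℝ):ℂ) • Mc)‖ * ‖(B ^ m) ^ k‖ := norm_mul_le _ _
      _ ≤ K * q ^ k := mul_le_mul hnorm1 hqk (norm_nonneg _) (le_trans zero_le_one hK1)
  have hqqk : q ^ k ≤ q⁻¹ * Real.exp (-α * t) := by
    have h1 : q ^ k = Real.exp ((k:ℝ) * Real.log q) := by
      rw [Real.exp_nat_mul, Real.exp_log hq0]
    have hkl : t/m - 1 ≤ (k:ℝ) := by linarith
    have h2 : (k:ℝ) * Real.log q ≤ (t/m - 1) * Real.log q :=
      mul_le_mul_of_nonpos_right hkl (le_of_lt hlogq)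
    have h4 : (t/m - 1) * Real.log q = -α * t - Real.log q := by
      rw [hα]; field_simp
    calc q ^ k = Real.exp ((k:ℝ) * Real.log q) := h1
      _ ≤ Real.exp ((t/m - 1) * Real.log q) := Real.exp_le_exp.mpr h2
      _ = q⁻¹ * Real.exp (-α * t) := by
          rw [h4, Real.exp_sub, Real.exp_log hq0]
          field_simp
  -- identify real and complex exponentials
  have hmapexp : (exp (t • M)).map ((↑) : ℝ → ℂ) = exp ((t:ℂ) • Mc) := by
    have hcontmap : Continuous
        (fun A : Matrix (Fin N ⊕ Fin N) (Fin N ⊕ Fin N) ℝ => A.map ((↑) : ℝ → ℂ)) :=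
      continuous_id.matrix_map Complex.continuous_ofReal
    have h1 : (exp (t • M)).map ((↑) : ℝ → ℂ) = exp ((t • M).map ((↑) : ℝ → ℂ)) := by
      exact
        (map_exp (Complex.ofRealHom.mapMatrix :
          Matrix (Fin N ⊕ Fin N) (Fin N ⊕ Fin N) ℝ →+* Matrix (Fin N ⊕ Fin N) (Fin N ⊕ Fin N) ℂ)
          hcontmap (t • M))
    rw [h1]
    have h2 : (t • M).map ((↑) : ℝ → ℂ) = (t:ℂ) • Mc := by
      ext i j
      simp only [Matrix.map_apply, Matrix.smul_apply, smul_eq_mul, Complex.real_smul,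
        Complex.ofReal_mul, hMcdef]
    rw [h2]
  have hnormcoe : ∀ x : (Fin N ⊕ Fin N) → ℝ, ‖(fun j => (x j : ℂ))‖ = ‖x‖ := by
    intro x
    rw [Pi.norm_def, Pi.norm_def]
    congr 1
    exact Finset.sup_congr rfl fun j _ => Complex.nnnorm_real (x j)
  have hcoord : (fun j => (((exp (t • M)).mulVec z) j : ℂ)) =
      (exp ((t:ℂ) • Mc)).mulVec (fun j => (z j : ℂ)) := by
    rw [coe_mulVec', hmapexp]
  calc ‖(exp (t • M)).mulVec z‖
      = ‖(exp ((t:ℂ) • Mc)).mulVec (fun j => (z j : ℂ))‖ := by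
        rw [← hcoord, hnormcoe]
    _ ≤ ‖exp ((t:ℂ) • Mc)‖ * ‖(fun j => (z j : ℂ) : (Fin N ⊕ Fin N) → ℂ)‖ :=
        Matrix.linfty_opNorm_mulVec _ _
    _ = ‖exp ((t:ℂ) • Mc)‖ * ‖z‖ := by rw [hnormcoe]
    _ ≤ (K * (q⁻¹ * Real.exp (-α * t))) * ‖z‖ := by
        apply mul_le_mul_of_nonneg_right _ (norm_nonneg z)
        calc ‖exp ((t:ℂ) • Mc)‖ ≤ K * q ^ k := hEt
          _ ≤ K * (q⁻¹ * Real.exp (-α * t)) :=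
              mul_le_mul_of_nonneg_left hqqk (le_trans zero_le_one hK1)
    _ = K / q * Real.exp (-α * t) * ‖z‖ := by
        field_simp


end Aux


open Matrix

/-- If the network is asymmetric, the noise-free linear dynamics is
exponentially contracting: `‖exp(tM) z‖ ≤ C e^{-α t} ‖z‖` for all `t ≥ 0` and `z`. -/
theorem stmt3 (N : ℕ) (hN : 0 < N) (G : SimpleGraph (Fin N)) [DecidableRel G.Adj]
    (hG : G.Connected)
    (D : Finset (Fin N)) (hD : D.Nonempty)
    (Γ : Matrix (Fin N) (Fin N) ℝ)
    (hΓ : Γ = 1 + (Matrix.diagonal (fun i => (G.degree i : ℝ)) - G.adjMatrix ℝ))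
    (ID : Matrix (Fin N) (Fin N) ℝ)
    (hID : ID = Matrix.diagonal (fun i => if i ∈ D then (1 : ℝ) else 0))
    (M : Matrix (Fin N ⊕ Fin N) (Fin N ⊕ Fin N) ℝ)
    (hM : M = Matrix.fromBlocks 0 1 (-Γ) (-ID))
    (hasym : Submodule.span ℝ
      {v : (Fin N ⊕ Fin N) → ℝ | ∃ i ∈ D, ∃ k : ℕ, v = (M ^ k).mulVec (Pi.single (Sum.inr i) 1)}
      = ⊤) :
    ∃ C : ℝ, 1 ≤ C ∧ ∃ α : ℝ, 0 < α ∧ ∀ t : ℝ, 0 ≤ t → ∀ z : (Fin N ⊕ Fin N) → ℝ,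
      ‖(NormedSpace.exp (t • M)).mulVec z‖ ≤ C * Real.exp (-α * t) * ‖z‖ := by
  exact stmt3_aux N hN G hG D hD Γ hΓ ID hID M hM hasym
end

section
/- If the network is not asymmetric, i.e. E_{M,D} ≠ ℝ^n, then there exist a real number α ≥ 1 and a nonzero vector z ∈ ℝ^N such that Γ z = α z and z_i = 0 for every i ∈ D. -/
open Matrix
open scoped ComplexOrder

private lemma stmt4_bound {N : ℕ} (G : SimpleGraph (Fin N)) [DecidableRel G.Adj]
    {Γ : Matrix (Fin N) (Fin N) ℝ}
    (hΓ : Γ = 1 + (Matrix.diagonal (fun i => (G.degree i : ℝ)) - G.adjMatrix ℝ))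
    {α : ℝ} {z : Fin N → ℝ} (hz : z ≠ 0) (he : Γ.mulVec z = α • z) : 1 ≤ α := by
  classical
  have hL : (G.lapMatrix ℝ).PosSemidef := G.posSemidef_lapMatrix ℝ
  have hΓ' : Γ = 1 + G.lapMatrix ℝ := hΓ
  have h1 : 0 ≤ z ⬝ᵥ ((G.lapMatrix ℝ) *ᵥ z) := by
    have := hL.re_dotProduct_nonneg z
    simpa using this
  have h2 : 0 < z ⬝ᵥ z := by
    rcases lt_or_eq_of_le (Finset.sum_nonneg fun i _ => mul_self_nonneg (z i) : (0:ℝ) ≤ ∑ i, z i * z i) with h | h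
    · simpa [dotProduct] using h
    · exact absurd (dotProduct_self_eq_zero.mp (by simpa [dotProduct] using h.symm)) hz
  have key : α * (z ⬝ᵥ z) = z ⬝ᵥ z + z ⬝ᵥ ((G.lapMatrix ℝ) *ᵥ z) := by
    have : z ⬝ᵥ (Γ *ᵥ z) = α * (z ⬝ᵥ z) := by
      rw [he, dotProduct_smul, smul_eq_mul]
    rw [← this, hΓ', Matrix.add_mulVec, Matrix.one_mulVec, dotProduct_add]
  nlinarith

/-- If the network is not asymmetric, then `Γ` has an eigenvector `z ≠ 0`
with eigenvalue `α ≥ 1` vanishing on all damped vertices. -/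
theorem stmt4 (N : ℕ) (hN : 0 < N) (G : SimpleGraph (Fin N)) [DecidableRel G.Adj]
    (hG : G.Connected)
    (D : Finset (Fin N)) (hD : D.Nonempty)
    (Γ : Matrix (Fin N) (Fin N) ℝ)
    (hΓ : Γ = 1 + (Matrix.diagonal (fun i => (G.degree i : ℝ)) - G.adjMatrix ℝ))
    (ID : Matrix (Fin N) (Fin N) ℝ)
    (hID : ID = Matrix.diagonal (fun i => if i ∈ D then (1 : ℝ) else 0))
    (M : Matrix (Fin N ⊕ Fin N) (Fin N ⊕ Fin N) ℝ)
    (hM : M = Matrix.fromBlocks 0 1 (-Γ) (-ID))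
    (hnotasym : Submodule.span ℝ
      {v : (Fin N ⊕ Fin N) → ℝ | ∃ i ∈ D, ∃ k : ℕ, v = (M ^ k).mulVec (Pi.single (Sum.inr i) 1)}
      ≠ ⊤) :
    ∃ α : ℝ, 1 ≤ α ∧ ∃ z : Fin N → ℝ, z ≠ 0 ∧ Γ.mulVec z = α • z ∧ ∀ i ∈ D, z i = 0 := by
  classical
  -- Step 1: a nonzero functional vanishing on the span, realized as a vector w
  obtain ⟨φ, hφne, hφ⟩ := Submodule.exists_dual_map_eq_bot_of_lt_top
    (lt_top_iff_ne_top.mpr hnotasym) inferInstance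
  set w : (Fin N ⊕ Fin N) → ℝ := fun i => φ (Pi.single i 1) with hw
  have hφval : ∀ v, φ v = w ⬝ᵥ v := by
    intro v
    have hsingle : ∀ i : Fin N ⊕ Fin N,
        Pi.single i (v i) = v i • (Pi.single i 1 : (Fin N ⊕ Fin N) → ℝ) := by
      intro i; funext j
      by_cases h : i = j <;> simp [Pi.single_apply, h]
    conv_lhs => rw [← Finset.univ_sum_single v]
    rw [map_sum]
    simp only [hsingle, _root_.map_smul]
    simp [dotProduct, hw, mul_comm]
  have hw0 : w ≠ 0 := by
    intro h
    apply hφne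
    apply LinearMap.ext
    intro v
    rw [hφval, h]
    simp
  have horth : ∀ (k : ℕ), ∀ i ∈ D, ((Mᵀ ^ k) *ᵥ w) (Sum.inr i) = 0 := by
    intro k i hi
    have hmem : (M ^ k) *ᵥ Pi.single (Sum.inr i) 1 ∈ Submodule.span ℝ
        {v : (Fin N ⊕ Fin N) → ℝ | ∃ i ∈ D, ∃ k : ℕ, v = (M ^ k).mulVec (Pi.single (Sum.inr i) 1)} :=
      Submodule.subset_span ⟨i, hi, k, rfl⟩
    have h0 : φ ((M ^ k) *ᵥ Pi.single (Sum.inr i) 1) = 0 := by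
      have : φ ((M ^ k) *ᵥ Pi.single (Sum.inr i) 1) ∈ Submodule.map φ (Submodule.span ℝ _) :=
        Submodule.mem_map_of_mem hmem
      rw [hφ] at this
      simpa using this
    rw [hφval] at h0
    rwa [Matrix.dotProduct_mulVec, dotProduct_single, mul_one,
      ← Matrix.mulVec_transpose, Matrix.transpose_pow] at h0
  -- Step 2: complexify and find an eigenvector in the invariant subspace
  set Mc : Matrix (Fin N ⊕ Fin N) (Fin N ⊕ Fin N) ℂ := Mᵀ.map Complex.ofReal with hMc
  have hMcpow : ∀ k : ℕ, Mc ^ k = (Mᵀ ^ k).map Complex.ofReal := by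
    intro k
    have := map_pow (Complex.ofRealHom.mapMatrix) Mᵀ k
    simp only [RingHom.mapMatrix_apply] at this
    exact this.symm
  set Wc : Submodule ℂ ((Fin N ⊕ Fin N) → ℂ) :=
    ⨅ (k : ℕ) (i : D), LinearMap.ker
      ((LinearMap.proj (Sum.inr (i : Fin N))).comp (Matrix.mulVecLin (Mc ^ k))) with hWc
  have hWcmem : ∀ z, z ∈ Wc ↔ ∀ (k : ℕ), ∀ i ∈ D, ((Mc ^ k) *ᵥ z) (Sum.inr i) = 0 := by
    intro z
    simp [hWc, Submodule.mem_iInf, LinearMap.mem_ker, Subtype.forall,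
      Matrix.mulVecLin_apply]
  have hmapvec : ∀ (k : ℕ), (Mc ^ k) *ᵥ (fun j => (w j : ℂ)) = fun j => (((Mᵀ ^ k) *ᵥ w) j : ℂ) := by
    intro k
    funext j
    rw [hMcpow]
    exact (RingHom.map_mulVec Complex.ofRealHom _ _ j).symm
  have hwc : (fun i => (w i : ℂ)) ∈ Wc := by
    rw [hWcmem]
    intro k i hi
    rw [hmapvec k]
    simp [horth k i hi]
  have hwcne : (fun i => (w i : ℂ)) ≠ 0 := by
    intro h
    apply hw0
    funext j
    have h1 : ((w j : ℂ)) = 0 := by simpa using congrFun h j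
    exact_mod_cast h1
  haveI : Nontrivial Wc := ⟨⟨⟨_, hwc⟩, 0, fun h => hwcne (congrArg Subtype.val h)⟩⟩
  have hinv : ∀ z ∈ Wc, Mc.mulVecLin z ∈ Wc := by
    intro z hz
    rw [hWcmem] at hz ⊢
    intro k i hi
    rw [Matrix.mulVecLin_apply, Matrix.mulVec_mulVec, ← pow_succ]
    exact hz (k+1) i hi
  obtain ⟨μ, hμ⟩ := Module.End.exists_eigenvalue ((Matrix.mulVecLin Mc).restrict hinv)
  obtain ⟨v, hv⟩ := hμ.exists_hasEigenvector
  have hvne : (v : (Fin N ⊕ Fin N) → ℂ) ≠ 0 := fun h => hv.2 (Subtype.ext h)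
  have heig : Mc *ᵥ (v : (Fin N ⊕ Fin N) → ℂ) = μ • (v : (Fin N ⊕ Fin N) → ℂ) := by
    have h1 := hv.apply_eq_smul
    have h2 := congrArg Subtype.val h1
    simpa [LinearMap.restrict_apply, Matrix.mulVecLin_apply] using h2
  -- Step 3: block structure
  have hΓsymm : Γᵀ = Γ := by
    rw [hΓ]
    rw [Matrix.transpose_add, Matrix.transpose_one, Matrix.transpose_sub,
      Matrix.diagonal_transpose, (G.isSymm_adjMatrix (α := ℝ)).eq]
  have hIDsymm : IDᵀ = ID := by rw [hID, Matrix.diagonal_transpose]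
  have hMT : Mᵀ = Matrix.fromBlocks 0 (-Γ) 1 (-ID) := by
    rw [hM, Matrix.fromBlocks_transpose]
    simp [Matrix.transpose_neg, hΓsymm, hIDsymm]
  set Γc : Matrix (Fin N) (Fin N) ℂ := Γ.map Complex.ofReal with hΓc
  set IDc : Matrix (Fin N) (Fin N) ℂ := ID.map Complex.ofReal with hIDcdef
  have hMcB : Mc = Matrix.fromBlocks 0 (-Γc) 1 (-IDc) := by
    rw [hMc, hMT]
    ext i j
    cases i <;> cases j <;>
      simp [Matrix.map_apply, Matrix.one_apply, hΓc, hIDcdef, apply_ite]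
  set x : Fin N → ℂ := fun i => (v : (Fin N ⊕ Fin N) → ℂ) (Sum.inl i) with hx
  set y : Fin N → ℂ := fun i => (v : (Fin N ⊕ Fin N) → ℂ) (Sum.inr i) with hy
  have hvelim : (v : (Fin N ⊕ Fin N) → ℂ) = Sum.elim x y := by
    funext j; cases j <;> rfl
  rw [hvelim, hMcB, Matrix.fromBlocks_mulVec] at heig
  have h1 : -(Γc *ᵥ y) = μ • x := by
    funext i
    have := congrFun heig (Sum.inl i)
    simpa [Matrix.zero_mulVec, Matrix.neg_mulVec] using this
  have h2 : x - IDc *ᵥ y = μ • y := by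
    funext i
    have := congrFun heig (Sum.inr i)
    simpa [Matrix.one_mulVec, Matrix.neg_mulVec, sub_eq_add_neg] using this
  have hyD : ∀ i ∈ D, y i = 0 := by
    intro i hi
    have := (hWcmem _).mp v.2 0 i hi
    simpa [pow_zero, Matrix.one_mulVec, hvelim] using this
  have hIDc : IDc = Matrix.diagonal (fun i => if i ∈ D then (1:ℂ) else 0) := by
    rw [hIDcdef, hID]
    ext i j
    rcases eq_or_ne i j with rfl | hij
    · by_cases h : i ∈ D <;> simp [Matrix.map_apply, Matrix.diagonal_apply_eq, h]
    · simp [Matrix.map_apply, Matrix.diagonal_apply_ne _ hij]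
  have hIDy : IDc *ᵥ y = 0 := by
    funext j
    rw [hIDc, Matrix.mulVec_diagonal]
    by_cases h : j ∈ D
    · simp [h, hyD j h]
    · simp [h]
  have hx2 : x = μ • y := by
    have := h2
    rw [hIDy] at this
    simpa using this
  have hΓcy : Γc *ᵥ y = (-(μ^2)) • y := by
    have h1' : -(Γc *ᵥ y) = (μ * μ) • y := by rw [h1, hx2, smul_smul]
    have h1'' := congrArg Neg.neg h1'
    rw [neg_neg] at h1''
    rw [h1'', ← neg_smul]
    congr 1
    ring
  have hyne : y ≠ 0 := by
    intro h
    apply hvne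
    rw [hvelim, hx2, h]
    simp
  -- Step 4: the eigenvalue is real
  have hΓcH : Γcᴴ = Γc := by
    ext i j
    simp only [Matrix.conjTranspose_apply, hΓc, Matrix.map_apply, Complex.star_def,
      Complex.conj_ofReal]
    have h : Γ j i = Γ i j := by
      have h2 := congrFun (congrFun hΓsymm j) i
      rw [Matrix.transpose_apply] at h2
      exact h2.symm
    rw [h]
  have ht : star y ⬝ᵥ y ≠ 0 := fun h => hyne (dotProduct_star_self_eq_zero.mp h)
  have hs : star (star y ⬝ᵥ (Γc *ᵥ y)) = star y ⬝ᵥ (Γc *ᵥ y) := by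
    conv_lhs => rw [Matrix.star_dotProduct, star_star, Matrix.star_mulVec, hΓcH,
      ← Matrix.dotProduct_mulVec]
  have hst : star (star y ⬝ᵥ y) = star y ⬝ᵥ y := (Matrix.star_dotProduct y y).symm
  have hseq : star y ⬝ᵥ (Γc *ᵥ y) = (-(μ^2)) * (star y ⬝ᵥ y) := by
    rw [hΓcy, dotProduct_smul, smul_eq_mul]
  have hβreal : (starRingEnd ℂ) (-(μ^2)) = -(μ^2) := by
    have hss := hs
    rw [hseq] at hss
    rw [star_mul', hst] at hss
    exact mul_right_cancel₀ ht hss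
  set α : ℝ := (-(μ^2)).re with hα
  have hβc : ((α : ℝ) : ℂ) = -(μ^2) := Complex.conj_eq_iff_re.mp hβreal
  have hΓcy' : Γc *ᵥ y = ((α : ℝ) : ℂ) • y := by rw [hβc]; exact hΓcy
  -- Step 5: pass to real and imaginary parts
  have hre : Γ *ᵥ (fun i => (y i).re) = α • (fun i => (y i).re) := by
    funext i
    have h := congrArg Complex.re (congrFun hΓcy' i)
    have hL : ((Γc *ᵥ y) i).re = (Γ *ᵥ (fun j => (y j).re)) i := by
      simp [Matrix.mulVec, dotProduct, hΓc, Matrix.map_apply, Complex.re_sum,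
        Complex.mul_re]
    have hR : ((((α : ℝ) : ℂ)) • y i).re = α * (y i).re := by
      simp [Complex.mul_re]
    rw [hL] at h
    rw [h]
    simpa using hR
  have him : Γ *ᵥ (fun i => (y i).im) = α • (fun i => (y i).im) := by
    funext i
    have h := congrArg Complex.im (congrFun hΓcy' i)
    have hL : ((Γc *ᵥ y) i).im = (Γ *ᵥ (fun j => (y j).im)) i := by
      simp [Matrix.mulVec, dotProduct, hΓc, Matrix.map_apply, Complex.im_sum,
        Complex.mul_im]
    have hR : ((((α : ℝ) : ℂ)) • y i).im = α * (y i).im := by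
      simp [Complex.mul_im]
    rw [hL] at h
    rw [h]
    simpa using hR
  by_cases hcase : (fun i => (y i).re) = (0 : Fin N → ℝ)
  · have himne : (fun i => (y i).im) ≠ (0 : Fin N → ℝ) := by
      intro h
      apply hyne
      funext i
      have h1 := congrFun hcase i
      have h2 := congrFun h i
      exact Complex.ext (by simpa using h1) (by simpa using h2)
    exact ⟨α, stmt4_bound G hΓ himne him, _, himne, him,
      fun i hi => by simp [hyD i hi]⟩
  · exact ⟨α, stmt4_bound G hΓ hcase hre, _, hcase, hre,
      fun i hi => by simp [hyD i hi]⟩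
end

section
/- Let α ∈ ℝ and z ∈ ℝ^N satisfy Γ z = α z and z_i = 0 for every i ∈ D. Then the quantity K(q,p) = α⟨z,q⟩² + ⟨z,p⟩² is a first integral of the damped harmonic dynamics: for every differentiable pair of curves q, p : ℝ → ℝ^N satisfying q′(t) = p(t) and p′(t) = −Γ q(t) − I_D p(t) for all t, the function t ↦ α⟨z, q(t)⟩² + ⟨z, p(t)⟩² is constant. -/
open Matrix

/-- If `Γ z = α z` and `z` vanishes on the damped set, then
`K(q,p) = α⟨z,q⟩² + ⟨z,p⟩²` is a first integral of the damped harmonic dynamics. -/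
theorem stmt5 (N : ℕ) (hN : 0 < N) (G : SimpleGraph (Fin N)) [DecidableRel G.Adj]
    (hG : G.Connected)
    (D : Finset (Fin N)) (hD : D.Nonempty)
    (Γ : Matrix (Fin N) (Fin N) ℝ)
    (hΓ : Γ = 1 + (Matrix.diagonal (fun i => (G.degree i : ℝ)) - G.adjMatrix ℝ))
    (ID : Matrix (Fin N) (Fin N) ℝ)
    (hID : ID = Matrix.diagonal (fun i => if i ∈ D then (1 : ℝ) else 0))
    (α : ℝ) (z : Fin N → ℝ)
    (hz : Γ.mulVec z = α • z) (hzD : ∀ i ∈ D, z i = 0)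
    (q p : ℝ → Fin N → ℝ)
    (hq : ∀ t : ℝ, HasDerivAt q (p t) t)
    (hp : ∀ t : ℝ, HasDerivAt p (-(Γ.mulVec (q t)) - ID.mulVec (p t)) t) :
    ∀ t s : ℝ,
      α * (z ⬝ᵥ q t) ^ 2 + (z ⬝ᵥ p t) ^ 2 = α * (z ⬝ᵥ q s) ^ 2 + (z ⬝ᵥ p s) ^ 2 := by
  -- Γ is symmetric
  have hsymm : Γ.IsSymm := by
    rw [hΓ]
    apply Matrix.IsSymm.add
    · exact Matrix.isSymm_one
    · exact Matrix.IsSymm.sub (Matrix.isSymm_diagonal _) (G.isSymm_adjMatrix)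
  -- z ⬝ᵥ Γ.mulVec v = α * (z ⬝ᵥ v)
  have key : ∀ v : Fin N → ℝ, z ⬝ᵥ Γ.mulVec v = α * (z ⬝ᵥ v) := by
    intro v
    rw [Matrix.dotProduct_mulVec, ← Matrix.mulVec_transpose, hsymm.eq, hz,
      smul_dotProduct]
    exact smul_eq_mul ..
  -- z ⬝ᵥ ID.mulVec v = 0
  have keyD : ∀ v : Fin N → ℝ, z ⬝ᵥ ID.mulVec v = 0 := by
    intro v
    rw [hID]
    simp only [dotProduct, Matrix.mulVec_diagonal]
    apply Finset.sum_eq_zero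
    intro i _
    by_cases h : i ∈ D
    · rw [hzD i h]; ring
    · simp [h]
  -- componentwise derivatives
  have hqc : ∀ (t : ℝ) (i : Fin N), HasDerivAt (fun t => q t i) (p t i) t := by
    intro t i
    exact (hasDerivAt_pi.mp (hq t)) i
  have hpc : ∀ (t : ℝ) (i : Fin N),
      HasDerivAt (fun t => p t i) ((-(Γ.mulVec (q t)) - ID.mulVec (p t)) i) t := by
    intro t i
    exact (hasDerivAt_pi.mp (hp t)) i
  -- derivatives of the dot products
  have hdq : ∀ t : ℝ, HasDerivAt (fun t => z ⬝ᵥ q t) (z ⬝ᵥ p t) t := by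
    intro t
    simp only [dotProduct]
    exact HasDerivAt.fun_sum fun i _ => (hqc t i).const_mul (z i)
  have hdp : ∀ t : ℝ,
      HasDerivAt (fun t => z ⬝ᵥ p t) (-(α * (z ⬝ᵥ q t))) t := by
    intro t
    have : HasDerivAt (fun t => z ⬝ᵥ p t) (z ⬝ᵥ (-(Γ.mulVec (q t)) - ID.mulVec (p t))) t := by
      simp only [dotProduct]
      exact HasDerivAt.fun_sum fun i _ => (hpc t i).const_mul (z i)
    have e : z ⬝ᵥ (-(Γ.mulVec (q t)) - ID.mulVec (p t)) = -(α * (z ⬝ᵥ q t)) := by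
      rw [dotProduct_sub, dotProduct_neg, key, keyD]
      ring
    rwa [e] at this
  -- the energy function has zero derivative everywhere
  set f : ℝ → ℝ := fun t => α * (z ⬝ᵥ q t) ^ 2 + (z ⬝ᵥ p t) ^ 2 with hf
  have hdf : ∀ t : ℝ, HasDerivAt f 0 t := by
    intro t
    have h1 : HasDerivAt (fun t => α * (z ⬝ᵥ q t) ^ 2)
        (α * (2 * (z ⬝ᵥ q t) * (z ⬝ᵥ p t))) t := by
      have := ((hdq t).pow 2).const_mul α
      simpa [mul_comm, mul_assoc, mul_left_comm] using this
    have h2 : HasDerivAt (fun t => (z ⬝ᵥ p t) ^ 2)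
        (2 * (z ⬝ᵥ p t) * (-(α * (z ⬝ᵥ q t)))) t := by
      have := (hdp t).fun_pow 2
      simpa [mul_comm, mul_assoc, mul_left_comm] using this
    have := h1.add h2
    have e : α * (2 * (z ⬝ᵥ q t) * (z ⬝ᵥ p t)) + 2 * (z ⬝ᵥ p t) * (-(α * (z ⬝ᵥ q t))) = 0 := by
      ring
    rwa [e] at this
  intro t s
  exact is_const_of_deriv_eq_zero (fun x => (hdf x).differentiableAt)
    (fun x => (hdf x).deriv) t s
end

section
/- If the network is not asymmetric, i.e. E_{M,D} ≠ ℝ^n, then the stability condition fails: there exists a nonconstant differentiable pair of curves q, p : ℝ → ℝ^N satisfying q′(t) = p(t) and p′(t) = −Γ q(t) for all t, and p_i(t) = 0 for every i ∈ D and every t ∈ ℝ. -/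
open Matrix

set_option synthInstance.maxHeartbeats 1000000
set_option maxHeartbeats 1000000

/-- If the network is not asymmetric, the stability condition fails:
there is a nonconstant solution of the Hamiltonian flow whose momenta vanish on
all damped vertices. -/
theorem stmt6 (N : ℕ) (hN : 0 < N) (G : SimpleGraph (Fin N)) [DecidableRel G.Adj]
    (hG : G.Connected)
    (D : Finset (Fin N)) (hD : D.Nonempty)
    (Γ : Matrix (Fin N) (Fin N) ℝ)
    (hΓ : Γ = 1 + (Matrix.diagonal (fun i => (G.degree i : ℝ)) - G.adjMatrix ℝ))
    (ID : Matrix (Fin N) (Fin N) ℝ)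
    (hID : ID = Matrix.diagonal (fun i => if i ∈ D then (1 : ℝ) else 0))
    (M : Matrix (Fin N ⊕ Fin N) (Fin N ⊕ Fin N) ℝ)
    (hM : M = Matrix.fromBlocks 0 1 (-Γ) (-ID))
    (hnotasym : Submodule.span ℝ
      {v : (Fin N ⊕ Fin N) → ℝ | ∃ i ∈ D, ∃ k : ℕ, v = (M ^ k).mulVec (Pi.single (Sum.inr i) 1)}
      ≠ ⊤) :
    ∃ q p : ℝ → Fin N → ℝ,
      (∀ t : ℝ, HasDerivAt q (p t) t) ∧
      (∀ t : ℝ, HasDerivAt p (-(Γ.mulVec (q t))) t) ∧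
      (∀ i ∈ D, ∀ t : ℝ, p t i = 0) ∧
      ∃ t s : ℝ, (q t, p t) ≠ (q s, p s) := by
  classical
  -- a nonzero linear functional vanishing on the Krylov space
  obtain ⟨f, hf0, hfmap⟩ :=
    Submodule.exists_dual_map_eq_bot_of_lt_top (p := Submodule.span ℝ
      {v : (Fin N ⊕ Fin N) → ℝ | ∃ i ∈ D, ∃ k : ℕ, v = (M ^ k).mulVec (Pi.single (Sum.inr i) 1)})
      (lt_top_iff_ne_top.mpr hnotasym) inferInstance
  have hgen : ∀ i ∈ D, ∀ k : ℕ, f ((M ^ k).mulVec (Pi.single (Sum.inr i) 1)) = 0 := by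
    intro i hi k
    have hv : (M ^ k).mulVec (Pi.single (Sum.inr i) 1) ∈ Submodule.span ℝ
        {v : (Fin N ⊕ Fin N) → ℝ | ∃ i ∈ D, ∃ k : ℕ, v = (M ^ k).mulVec (Pi.single (Sum.inr i) 1)} :=
      Submodule.subset_span ⟨i, hi, k, rfl⟩
    have hmem := Submodule.mem_map_of_mem (f := f) hv
    rw [hfmap] at hmem
    simpa using hmem
  set w : (Fin N ⊕ Fin N) → ℝ := fun j => f (fun j' => if j = j' then 1 else 0) with hw
  have hfw : ∀ v, f v = ∑ j, v j * w j := by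
    intro v
    rw [LinearMap.pi_apply_eq_sum_univ f v]
    rfl
  -- symmetry of Γ
  have hΓs : Γᵀ = Γ := by
    rw [hΓ]
    simp [Matrix.transpose_add, Matrix.transpose_sub, Matrix.transpose_one,
      Matrix.diagonal_transpose, SimpleGraph.transpose_adjMatrix]
  have hsym : ∀ a b, Γ a b = Γ b a := by
    intro a b
    have h := congrFun (congrFun hΓs a) b
    rw [Matrix.transpose_apply] at h
    exact h.symm
  -- the generator as a continuous linear operator
  set T : ((Fin N ⊕ Fin N) → ℝ) →L[ℝ] ((Fin N ⊕ Fin N) → ℝ) :=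
    LinearMap.toContinuousLinearMap (Matrix.mulVecLin Mᵀ) with hT
  have hTapp : ∀ v, T v = Mᵀ *ᵥ v := fun _ => rfl
  have hTk : ∀ (k : ℕ) (v : (Fin N ⊕ Fin N) → ℝ), (T ^ k) v = (M ^ k)ᵀ *ᵥ v := by
    intro k
    induction k with
    | zero => intro v; simp [Matrix.one_mulVec]
    | succ k ih =>
      intro v
      rw [pow_succ, ContinuousLinearMap.mul_apply, hTapp, ih, Matrix.mulVec_mulVec,
        ← Matrix.transpose_mul, ← pow_succ']
  set y : ℝ → (Fin N ⊕ Fin N) → ℝ := fun t => NormedSpace.exp (t • T) w with hy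
  -- the momenta components vanish on D for all times
  have hvanish : ∀ (t : ℝ), ∀ i ∈ D, y t (Sum.inr i) = 0 := by
    intro t i hi
    have hsum : Summable fun k : ℕ => (Nat.factorial k : ℝ)⁻¹ • (t • T) ^ k :=
      NormedSpace.expSeries_summable' (t • T)
    set Φ : (((Fin N ⊕ Fin N) → ℝ) →L[ℝ] ((Fin N ⊕ Fin N) → ℝ)) →L[ℝ] ℝ :=
      (ContinuousLinearMap.proj (Sum.inr i)).comp
        (ContinuousLinearMap.apply ℝ ((Fin N ⊕ Fin N) → ℝ) w) with hΦ
    have hterm : ∀ k : ℕ, Φ ((Nat.factorial k : ℝ)⁻¹ • (t • T) ^ k) = 0 := by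
      intro k
      have h1 : Φ ((Nat.factorial k : ℝ)⁻¹ • (t • T) ^ k)
          = (Nat.factorial k : ℝ)⁻¹ * (((t • T) ^ k) w (Sum.inr i)) := by
        rw [_root_.map_smul, smul_eq_mul]; rfl
      have h2 : ((t • T) ^ k) w (Sum.inr i)
          = t ^ k * f ((M ^ k).mulVec (Pi.single (Sum.inr i) 1)) := by
        rw [smul_pow, ContinuousLinearMap.smul_apply, Pi.smul_apply, smul_eq_mul, hTk]
        congr 1
        rw [hfw]
        simp [Matrix.mulVec, dotProduct, Matrix.transpose_apply, Pi.single_apply]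
      rw [h1, h2, hgen i hi k, mul_zero, mul_zero]
    have key : Φ (NormedSpace.exp (t • T)) = 0 := by
      rw [NormedSpace.exp_eq_tsum (𝕂 := ℝ)]
      rw [Φ.map_tsum hsum]
      simp only [hterm, tsum_zero]
    exact key
  -- derivative of y
  have hdy : ∀ t : ℝ, HasDerivAt y (Mᵀ *ᵥ y t) t := by
    intro t
    have h1 := hasDerivAt_exp_smul_const' T t
    have h2 := ((ContinuousLinearMap.apply ℝ ((Fin N ⊕ Fin N) → ℝ)
      w).hasFDerivAt.comp_hasDerivAt t h1)
    exact h2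
  -- structure of Mᵀ *ᵥ v for v vanishing on inr D
  have hMt : ∀ (v : (Fin N ⊕ Fin N) → ℝ), (∀ j ∈ D, v (Sum.inr j) = 0) →
      (∀ i, (Mᵀ *ᵥ v) (Sum.inr i) = v (Sum.inl i)) ∧
      (∀ i, (Mᵀ *ᵥ v) (Sum.inl i) = -(Γ *ᵥ (fun a => v (Sum.inr a))) i) := by
    intro v hv
    constructor
    · intro i
      have hstep : (Mᵀ *ᵥ v) (Sum.inr i) =
          (∑ a, (1 : Matrix (Fin N) (Fin N) ℝ) a i * v (Sum.inl a)) +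
          (∑ a, (-ID) a i * v (Sum.inr a)) := by
        simp [Matrix.mulVec, dotProduct, Fintype.sum_sum_type, hM,
          Matrix.transpose_apply]
      rw [hstep]
      have h1 : ∑ a, (1 : Matrix (Fin N) (Fin N) ℝ) a i * v (Sum.inl a) = v (Sum.inl i) := by
        simp [Matrix.one_apply]
      have h2 : ∑ a, (-ID) a i * v (Sum.inr a) = 0 := by
        apply Finset.sum_eq_zero
        intro a _
        by_cases hai : a = i
        · subst hai
          by_cases haD : a ∈ D
          · rw [hv a haD, mul_zero]
          · rw [hID]
            simp [Matrix.diagonal_apply_eq, haD]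
        · rw [hID]
          simp [Matrix.diagonal_apply_ne _ hai]
      rw [h1, h2, add_zero]
    · intro i
      have hstep : (Mᵀ *ᵥ v) (Sum.inl i) =
          (∑ a, (0 : Matrix (Fin N) (Fin N) ℝ) a i * v (Sum.inl a)) +
          (∑ a, (-Γ) a i * v (Sum.inr a)) := by
        simp [Matrix.mulVec, dotProduct, Fintype.sum_sum_type, hM,
          Matrix.transpose_apply]
      rw [hstep]
      have hrhs : -(Γ *ᵥ (fun a => v (Sum.inr a))) i = -∑ a, Γ i a * v (Sum.inr a) := by
        simp [Matrix.mulVec, dotProduct]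
      rw [hrhs]
      simp only [Matrix.zero_apply, zero_mul, Finset.sum_const_zero, zero_add]
      rw [← Finset.sum_neg_distrib]
      exact Finset.sum_congr rfl fun a _ => by
        rw [Matrix.neg_apply, hsym a i, neg_mul]
  set q : ℝ → Fin N → ℝ := fun t i => y t (Sum.inr i) with hq
  set p : ℝ → Fin N → ℝ := fun t i => y t (Sum.inl i) with hp
  have hdq : ∀ t : ℝ, HasDerivAt q (p t) t := by
    intro t
    rw [hasDerivAt_pi]
    intro i
    have h := (hasDerivAt_pi.mp (hdy t)) (Sum.inr i)
    rw [(hMt (y t) (fun j hj => hvanish t j hj)).1 i] at h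
    exact h
  have hdp : ∀ t : ℝ, HasDerivAt p (-(Γ.mulVec (q t))) t := by
    intro t
    rw [hasDerivAt_pi]
    intro i
    have h := (hasDerivAt_pi.mp (hdy t)) (Sum.inl i)
    rw [(hMt (y t) (fun j hj => hvanish t j hj)).2 i] at h
    exact h
  refine ⟨q, p, hdq, hdp, ?_, ?_⟩
  · intro i hi t
    have h1 : HasDerivAt (fun s => q s i) (p t i) t := (hasDerivAt_pi.mp (hdq t)) i
    have h2 : HasDerivAt (fun s => q s i) 0 t := by
      have hz : (fun s => q s i) = fun _ : ℝ => (0 : ℝ) := funext fun s => hvanish s i hi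
      rw [hz]; exact hasDerivAt_const t 0
    exact h1.unique h2
  · by_contra hcon
    push_neg at hcon
    have hconst : ∀ t : ℝ, y t = y 0 := by
      intro t
      have h := hcon t 0
      rw [Prod.ext_iff] at h
      obtain ⟨hq0, hp0⟩ := h
      funext j
      cases j with
      | inl a => exact congrFun hp0 a
      | inr a => exact congrFun hq0 a
    have hy0 : y 0 = w := by
      show NormedSpace.exp ((0 : ℝ) • T) w = w
      rw [zero_smul, NormedSpace.exp_zero, ContinuousLinearMap.one_apply]
    have hMw : Mᵀ *ᵥ w = 0 := by
      have h1 : HasDerivAt y (Mᵀ *ᵥ y 0) 0 := hdy 0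
      have h2 : HasDerivAt y 0 0 := by
        have hcy : y = fun _ : ℝ => y 0 := funext hconst
        rw [hcy]; exact hasDerivAt_const 0 _
      have h3 := h1.unique h2
      rwa [hy0] at h3
    have hwD : ∀ j ∈ D, w (Sum.inr j) = 0 := by
      intro j hj
      rw [← hy0]; exact hvanish 0 j hj
    obtain ⟨hA, hB⟩ := hMt w hwD
    have hΓpos : Γ.PosDef := by
      rw [hΓ]
      have hlap : (Matrix.diagonal (fun i => (G.degree i : ℝ)) - G.adjMatrix ℝ)
          = G.lapMatrix ℝ := rfl
      rw [hlap]
      exact Matrix.PosDef.add_posSemidef Matrix.PosDef.one (G.posSemidef_lapMatrix (R := ℝ))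
    have hΓb : Γ *ᵥ (fun a => w (Sum.inr a)) = 0 := by
      funext i
      have h := hB i
      rw [hMw] at h
      simp only [Pi.zero_apply] at h ⊢
      linarith [h]
    have hbz : (fun a => w (Sum.inr a)) = 0 :=
      Matrix.eq_zero_of_mulVec_eq_zero hΓpos.det_pos.ne' hΓb
    have hwz : w = 0 := by
      funext j
      cases j with
      | inr a => exact congrFun hbz a
      | inl a =>
        have h := hA a
        rw [hMw] at h
        simpa using h.symm
    apply hf0
    apply LinearMap.ext
    intro v
    rw [hfw v, hwz]
    simp
end

section
/- If the network is asymmetric, i.e. E_{M,D} = ℝ^n, then the stability condition holds in the harmonic case: if q, p : ℝ → ℝ^N are differentiable curves satisfying q′(t) = p(t), p′(t) = −Γ q(t) for all t, and p_i(t) = 0 for every i ∈ D and every t ∈ ℝ, then q(t) = 0 and p(t) = 0 for all t. -/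
open Matrix

/-- If the network is asymmetric, the stability condition holds in the
harmonic case: any solution of the Hamiltonian flow whose momenta vanish on all
damped vertices is identically zero. -/
theorem stmt7 (N : ℕ) (hN : 0 < N) (G : SimpleGraph (Fin N)) [DecidableRel G.Adj]
    (hG : G.Connected)
    (D : Finset (Fin N)) (hD : D.Nonempty)
    (Γ : Matrix (Fin N) (Fin N) ℝ)
    (hΓ : Γ = 1 + (Matrix.diagonal (fun i => (G.degree i : ℝ)) - G.adjMatrix ℝ))
    (ID : Matrix (Fin N) (Fin N) ℝ)
    (hID : ID = Matrix.diagonal (fun i => if i ∈ D then (1 : ℝ) else 0))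
    (M : Matrix (Fin N ⊕ Fin N) (Fin N ⊕ Fin N) ℝ)
    (hM : M = Matrix.fromBlocks 0 1 (-Γ) (-ID))
    (hasym : Submodule.span ℝ
      {v : (Fin N ⊕ Fin N) → ℝ | ∃ i ∈ D, ∃ k : ℕ, v = (M ^ k).mulVec (Pi.single (Sum.inr i) 1)}
      = ⊤)
    (q p : ℝ → Fin N → ℝ)
    (hq : ∀ t : ℝ, HasDerivAt q (p t) t)
    (hp : ∀ t : ℝ, HasDerivAt p (-(Γ.mulVec (q t))) t)
    (hpD : ∀ i ∈ D, ∀ t : ℝ, p t i = 0) :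
    ∀ t : ℝ, q t = 0 ∧ p t = 0 := by
  classical
  -- Γ is positive definite (hence symmetric)
  have hlap : Matrix.diagonal (fun i => (G.degree i : ℝ)) - G.adjMatrix ℝ = G.lapMatrix ℝ := rfl
  have hΓpd : Γ.PosDef := by
    rw [hΓ, hlap]
    exact Matrix.PosDef.add_posSemidef Matrix.PosDef.one (SimpleGraph.posSemidef_lapMatrix ℝ G)
  have hΓsymm : Γᵀ = Γ := by
    have := hΓpd.isHermitian
    rwa [Matrix.IsHermitian, Matrix.conjTranspose_eq_transpose_of_trivial] at this
  have hIDsymm : IDᵀ = ID := by rw [hID, Matrix.diagonal_transpose]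
  -- the symmetrizer S
  set S : Matrix (Fin N ⊕ Fin N) (Fin N ⊕ Fin N) ℝ :=
    Matrix.fromBlocks (-Γ) 0 0 1 with hS
  have hSsymm : Sᵀ = S := by
    rw [hS, Matrix.fromBlocks_transpose]
    simp [Matrix.transpose_neg, hΓsymm]
  have hSM : S * M = Mᵀ * S := by
    rw [hS, hM, Matrix.fromBlocks_transpose, Matrix.fromBlocks_multiply,
      Matrix.fromBlocks_multiply]
    simp [hΓsymm, hIDsymm, Matrix.mul_one, Matrix.one_mul]
  have hSMk : ∀ k : ℕ, S * M ^ k = (Mᵀ) ^ k * S := by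
    intro k
    induction k with
    | zero => simp
    | succ k ih =>
      rw [pow_succ, ← mul_assoc, ih, mul_assoc, hSM, ← mul_assoc, ← pow_succ]
  -- the trajectory
  set x : ℝ → (Fin N ⊕ Fin N) → ℝ := fun t => Sum.elim (q t) (p t) with hx
  have hIDp : ∀ t, ID.mulVec (p t) = 0 := by
    intro t
    funext j
    rw [hID]
    rw [Matrix.mulVec_diagonal]
    by_cases hj : j ∈ D
    · simp [hj, hpD j hj t]
    · simp [hj]
  have hxd : ∀ t, HasDerivAt x (M.mulVec (x t)) t := by
    intro t
    have hMx : M.mulVec (x t) = Sum.elim (p t) (-(Γ.mulVec (q t))) := by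
      rw [hM, Matrix.fromBlocks_mulVec]
      have h1 : (x t) ∘ Sum.inl = q t := rfl
      have h2 : (x t) ∘ Sum.inr = p t := rfl
      rw [h1, h2]
      simp [Matrix.neg_mulVec, hIDp t, Matrix.one_mulVec]
    rw [hMx]
    rw [hasDerivAt_pi]
    rintro (j | j)
    · exact hasDerivAt_pi.1 (hq t) j
    · exact hasDerivAt_pi.1 (hp t) j
  -- derivative of M^k x
  have hder : ∀ (k : ℕ) (t : ℝ),
      HasDerivAt (fun s => (M ^ k).mulVec (x s)) ((M ^ k).mulVec (M.mulVec (x t))) t := by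
    intro k t
    have hL := (LinearMap.toContinuousLinearMap ((M ^ k).mulVecLin)).hasFDerivAt
      (x := x t)
    exact hL.comp_hasDerivAt t (hxd t)
  -- all derivatives of p_i vanish on D
  have h0 : ∀ (k : ℕ), ∀ i ∈ D, ∀ t : ℝ, ((M ^ k).mulVec (x t)) (Sum.inr i) = 0 := by
    intro k
    induction k with
    | zero =>
      intro i hi t
      simp only [pow_zero, Matrix.one_mulVec]
      exact hpD i hi t
    | succ k ih =>
      intro i hi t
      have h1 : HasDerivAt (fun s => ((M ^ k).mulVec (x s)) (Sum.inr i))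
          (((M ^ k).mulVec (M.mulVec (x t))) (Sum.inr i)) t :=
        hasDerivAt_pi.1 (hder k t) _
      have h2 : (fun s => ((M ^ k).mulVec (x s)) (Sum.inr i)) = fun _ => (0 : ℝ) :=
        funext fun s => ih i hi s
      have h3 : HasDerivAt (fun s => ((M ^ k).mulVec (x s)) (Sum.inr i)) 0 t := by
        rw [h2]; exact hasDerivAt_const t 0
      have h4 := h1.unique h3
      rw [pow_succ, ← Matrix.mulVec_mulVec]
      exact h4
  intro t
  -- orthogonality
  set y : (Fin N ⊕ Fin N) → ℝ := S.mulVec (x t) with hy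
  have hsingle : ∀ i : Fin N, (Pi.single (Sum.inr i) 1 : (Fin N ⊕ Fin N) → ℝ)
      = Sum.elim (0 : Fin N → ℝ) (Pi.single i 1) := by
    intro i
    funext j
    cases j with
    | inl j => simp [Pi.single_apply]
    | inr j => simp [Pi.single_apply]
  have hSe : ∀ i : Fin N, S.mulVec (Pi.single (Sum.inr i) 1) = Pi.single (Sum.inr i) 1 := by
    intro i
    rw [hsingle i, hS, Matrix.fromBlocks_mulVec]
    have h1 : (Sum.elim (0 : Fin N → ℝ) (Pi.single i 1)) ∘ Sum.inl = 0 := rfl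
    have h2 : (Sum.elim (0 : Fin N → ℝ) (Pi.single i 1)) ∘ Sum.inr = Pi.single i 1 := rfl
    rw [h1, h2, Matrix.mulVec_zero, Matrix.mulVec_zero, Matrix.zero_mulVec,
      Matrix.one_mulVec, zero_add, zero_add]
  have hperp : ∀ v ∈ {v : (Fin N ⊕ Fin N) → ℝ |
      ∃ i ∈ D, ∃ k : ℕ, v = (M ^ k).mulVec (Pi.single (Sum.inr i) 1)},
      dotProduct y v = 0 := by
    rintro v ⟨i, hi, k, rfl⟩
    have : dotProduct y ((M ^ k).mulVec (Pi.single (Sum.inr i) 1))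
        = dotProduct (x t) (S.mulVec ((M ^ k).mulVec (Pi.single (Sum.inr i) 1))) := by
      rw [Matrix.dotProduct_mulVec (x t) S, ← hSsymm, Matrix.vecMul_transpose, hy]
    rw [this, Matrix.mulVec_mulVec, hSMk k, ← Matrix.mulVec_mulVec, hSe i,
      Matrix.dotProduct_mulVec, ← Matrix.transpose_pow, Matrix.vecMul_transpose,
      dotProduct_single]
    rw [h0 k i hi t, zero_mul]
  -- conclude y = 0
  let φ : ((Fin N ⊕ Fin N) → ℝ) →ₗ[ℝ] ℝ :=
    { toFun := fun v => dotProduct y v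
      map_add' := fun a b => dotProduct_add y a b
      map_smul' := fun c a => by simp [dotProduct_smul] }
  have hle : Submodule.span ℝ {v : (Fin N ⊕ Fin N) → ℝ |
      ∃ i ∈ D, ∃ k : ℕ, v = (M ^ k).mulVec (Pi.single (Sum.inr i) 1)} ≤ LinearMap.ker φ :=
    Submodule.span_le.mpr fun v hv => hperp v hv
  rw [hasym] at hle
  have hy0 : y = 0 := by
    have : φ y = 0 := hle (Submodule.mem_top)
    exact dotProduct_self_eq_zero.mp this
  -- unpack y = 0
  have hyform : y = Sum.elim (-(Γ.mulVec (q t))) (p t) := by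
    rw [hy, hS, Matrix.fromBlocks_mulVec]
    have h1 : (x t) ∘ Sum.inl = q t := rfl
    have h2 : (x t) ∘ Sum.inr = p t := rfl
    rw [h1, h2]
    simp [Matrix.neg_mulVec, Matrix.one_mulVec]
  rw [hyform] at hy0
  have hp0 : p t = 0 := by
    funext j
    have := congrFun hy0 (Sum.inr j)
    simpa using this
  have hΓq : Γ.mulVec (q t) = 0 := by
    funext j
    have := congrFun hy0 (Sum.inl j)
    simp only [Sum.elim_inl, Pi.neg_apply, Pi.zero_apply, neg_eq_zero] at this
    exact this
  have hq0 : q t = 0 := by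
    by_contra h
    have := hΓpd.dotProduct_mulVec_pos h
    rw [star_trivial, hΓq, dotProduct_zero] at this
    exact lt_irrefl 0 this
  exact ⟨hq0, hp0⟩
end

section
/- Energy dissipation under the rigidity condition: assume the rigidity condition holds, namely there is a point c₀ ∈ ℝ^N × ℝ^N with H_∞(c₀) = 0 such that for every T > 0, every differentiable pair of curves q, p : [0,T] → ℝ^N satisfying q_i′ = p_i and p_i′ = −∂_{q_i}H_∞(q,p) for all i ∈ V, together with p_i(t) = 0 for every i ∈ D and every t ∈ [0,T], is constant equal to c₀. Then for every differentiable solution (q,p) : [0,∞) → ℝ^N × ℝ^N of the damped limit system q_i′ = p_i, p_i′ = −∂_{q_i}H_∞(q,p) − 1_{i∈D} p_i with initial energy H_∞(q(0),p(0)) = 1, and for every t > 0, one has ∫_0^t Σ_{i∈D} p_i(s)² ds > 0. -/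
/-- The limit Hamiltonian
`H_∞(q,p) = Σ_i ( p_i²/2 + 1_{u=v} q_i^v ) + (1/2) Σ_i Σ_{j∼i} (q_j − q_i)^u`. -/
noncomputable def limitHamiltonian {N : ℕ} (G : SimpleGraph (Fin N)) [DecidableRel G.Adj]
    (u v : ℕ) : (Fin N → ℝ) × (Fin N → ℝ) → ℝ :=
  fun w =>
    (∑ i : Fin N, (w.2 i ^ 2 / 2 + (if u = v then 1 else 0) * w.1 i ^ v))
      + (1 / 2) * ∑ i : Fin N, ∑ j ∈ G.neighborFinset i, (w.1 j - w.1 i) ^ u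

/-- energy dissipation under the rigidity condition: if every solution of
the limit Hamiltonian flow with momenta vanishing on the damped set is constant equal to
the minimizer `c₀` (with `H_∞(c₀) = 0`), then every solution of the damped limit system
with initial energy `1` dissipates: `∫_0^t Σ_{i∈D} p_i(s)² ds > 0` for every `t > 0`. -/
theorem stmt14 (N : ℕ) (hN : 0 < N) (G : SimpleGraph (Fin N)) [DecidableRel G.Adj]
    (hG : G.Connected)
    (D : Finset (Fin N)) (hD : D.Nonempty)
    (u v : ℕ) (hu : Even u) (hv : Even v) (hv2 : 2 ≤ v) (huv : v ≤ u)
    (H : (Fin N → ℝ) × (Fin N → ℝ) → ℝ) (hH : H = limitHamiltonian G u v)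
    (c₀ : (Fin N → ℝ) × (Fin N → ℝ)) (hc₀ : H c₀ = 0)
    (hrigid : ∀ T : ℝ, 0 < T → ∀ q p : ℝ → Fin N → ℝ,
      (∀ t ∈ Set.Icc (0 : ℝ) T, ∀ i : Fin N, HasDerivAt (fun s => q s i) (p t i) t) →
      (∀ t ∈ Set.Icc (0 : ℝ) T, ∀ i : Fin N,
        HasDerivAt (fun s => p s i) (-(fderiv ℝ H (q t, p t) (Pi.single i 1, 0))) t) →
      (∀ i ∈ D, ∀ t ∈ Set.Icc (0 : ℝ) T, p t i = 0) →
      ∀ t ∈ Set.Icc (0 : ℝ) T, (q t, p t) = c₀)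
    (q p : ℝ → Fin N → ℝ)
    (hq : ∀ t ∈ Set.Ici (0 : ℝ), ∀ i : Fin N, HasDerivAt (fun s => q s i) (p t i) t)
    (hp : ∀ t ∈ Set.Ici (0 : ℝ), ∀ i : Fin N,
      HasDerivAt (fun s => p s i)
        (-(fderiv ℝ H (q t, p t) (Pi.single i 1, 0)) - (if i ∈ D then 1 else 0) * p t i) t)
    (hinit : H (q 0, p 0) = 1) :
    ∀ t : ℝ, 0 < t → 0 < ∫ s in (0 : ℝ)..t, ∑ i ∈ D, p s i ^ 2 := by
  intro t ht
  by_contra hle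
  push_neg at hle
  set f : ℝ → ℝ := fun s => ∑ i ∈ D, p s i ^ 2 with hf
  -- continuity of f at every point of [0, ∞)
  have hcont : ∀ s ∈ Set.Ici (0 : ℝ), ContinuousAt f s := by
    intro s hs
    have : ∀ i ∈ D, Filter.Tendsto (fun r => p r i ^ 2) (nhds s) (nhds (p s i ^ 2)) := by
      intro i _
      exact ((hp s hs i).continuousAt).pow 2
    exact tendsto_finset_sum D this
  have hnonneg : ∀ s, 0 ≤ f s := by
    intro s
    exact Finset.sum_nonneg fun i _ => sq_nonneg _
  have hContOn : ContinuousOn f (Set.Icc 0 t) := fun s hs =>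
    (hcont s hs.1).continuousWithinAt
  have hInt : IntervalIntegrable f MeasureTheory.volume 0 t := by
    exact ContinuousOn.intervalIntegrable (by rwa [Set.uIcc_of_le ht.le])
  have hzero : ∫ s in (0:ℝ)..t, f s = 0 :=
    le_antisymm hle (intervalIntegral.integral_nonneg ht.le fun s _ => hnonneg s)
  -- f vanishes a.e. on (0, t]
  have hae : ∀ᵐ x, x ∈ Set.Ioc (0:ℝ) t → f x = 0 := by
    have := (intervalIntegral.integral_eq_zero_iff_of_le_of_nonneg_ae ht.le
      (Filter.Eventually.of_forall fun s => hnonneg s) hInt).mp hzero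
    exact (MeasureTheory.ae_restrict_iff' measurableSet_Ioc).mp this
  -- f vanishes everywhere on [0, t]
  have hfz : ∀ s ∈ Set.Icc (0:ℝ) t, f s = 0 := by
    intro s hs
    by_contra hne
    have hpos : (0:ℝ) < f s := lt_of_le_of_ne (hnonneg s) (Ne.symm hne)
    have hev : ∀ᶠ x in nhds s, f x ≠ 0 := (hcont s hs.1).eventually_ne hne
    rcases Metric.eventually_nhds_iff.mp hev with ⟨δ, hδ, hball⟩
    set a := max (s - δ) 0 with ha
    set b := min (s + δ) t with hb
    have hab : a < b := by
      apply max_lt <;> apply lt_min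
      · linarith
      · linarith [hs.2]
      · linarith [hs.1]
      · exact ht
    have hsub : Set.Ioo a b ⊆ {x | ¬ (x ∈ Set.Ioc (0:ℝ) t → f x = 0)} := by
      intro x hx
      have hx1 : x ∈ Set.Ioc (0:ℝ) t :=
        ⟨lt_of_le_of_lt (le_max_right _ _) hx.1, le_trans hx.2.le (min_le_right _ _)⟩
      have hxd : dist x s < δ := by
        rw [Real.dist_eq, abs_lt]
        constructor
        · have := lt_of_le_of_lt (le_max_left (s - δ) 0) hx.1; linarith
        · have := lt_of_lt_of_le hx.2 (min_le_left (s + δ) t); linarith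
      exact fun h => hball hxd (h hx1)
    have h0 : MeasureTheory.volume {x | ¬ (x ∈ Set.Ioc (0:ℝ) t → f x = 0)} = 0 := hae
    have : MeasureTheory.volume (Set.Ioo a b) = 0 :=
      le_antisymm (h0 ▸ MeasureTheory.measure_mono hsub) zero_le
    rw [Real.volume_Ioo] at this
    exact (ENNReal.ofReal_pos.mpr (by linarith)).ne' this
  -- momenta vanish on D over [0, t]
  have hpz : ∀ i ∈ D, ∀ s ∈ Set.Icc (0:ℝ) t, p s i = 0 := by
    intro i hi s hs
    have := (Finset.sum_eq_zero_iff_of_nonneg fun j _ => sq_nonneg (p s j)).mp (hfz s hs) i hi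
    exact pow_eq_zero_iff (by norm_num) |>.mp this
  -- apply rigidity on [0, t]
  have hconst := hrigid t ht q p
    (fun s hs i => hq s hs.1 i)
    (by
      intro s hs i
      have hd := hp s hs.1 i
      have : -(fderiv ℝ H (q s, p s) (Pi.single i 1, 0)) - (if i ∈ D then 1 else 0) * p s i
          = -(fderiv ℝ H (q s, p s) (Pi.single i 1, 0)) := by
        by_cases hi : i ∈ D
        · rw [hpz i hi s hs]; simp
        · simp [hi]
      rwa [this] at hd)
    hpz 0 ⟨le_refl 0, ht.le⟩
  rw [hconst, hc₀] at hinit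
  exact one_ne_zero hinit.symm
end
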